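/- arXiv:2003.13445 — 6 statements merged into one kernel-verified Lean document; each statement's English description precedes it below -/
import Mathlib

section
/- Let (A_n)_{n∈ℤ} admit a generalized exponential dichotomy with bounds ‖𝒜(m,n)P_n‖ ≤ D e^{-λ(m-n)} for m ≥ n and ‖𝒜(m,n)(Id-P_n)‖ ≤ D e^{-λ(n-m)} for m ≤ n. If (y_n)_{n∈ℤ} is a bounded sequence in X, then the sequence x_n = Σ_{k=-∞}^{n} 𝒜(n,k)P_k y_k − Σ_{k=n+1}^{∞} 𝒜(n,k)(Id - P_k) y_k is well-defined (the series converge absolutely), bounded, and satisfies x_{n+1} − A_n x_n = y_{n+1} for every n ∈ ℤ. -/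
theorem stmt_1
    {X : Type*} [NormedAddCommGroup X] [NormedSpace ℝ X] [CompleteSpace X]
    (A : ℤ → X ≃L[ℝ] X) (𝒜 : ℤ → ℤ → X →L[ℝ] X)
    (hid : ∀ n, 𝒜 n n = ContinuousLinearMap.id ℝ X)
    (hco : ∀ m n, 𝒜 (m + 1) n = (A m : X →L[ℝ] X).comp (𝒜 m n))
    (P : ℤ → X →L[ℝ] X)
    (D lam : ℝ) (hD : 0 < D) (hlam : 0 < lam)
    (hb1 : ∀ m n, n ≤ m →
      ‖(𝒜 m n).comp (P n)‖ ≤ D * Real.exp (-lam * ((m : ℝ) - (n : ℝ))))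
    (hb2 : ∀ m n, m ≤ n →
      ‖(𝒜 m n).comp (ContinuousLinearMap.id ℝ X - P n)‖ ≤
        D * Real.exp (-lam * ((n : ℝ) - (m : ℝ))))
    (y : ℤ → X) (hy : ∃ C, ∀ n, ‖y n‖ ≤ C) :
    ∃ x : ℤ → X,
      (∀ n : ℤ,
        Summable (fun k : ℕ => ‖𝒜 n (n - (k : ℤ)) (P (n - (k : ℤ)) (y (n - (k : ℤ))))‖) ∧
        Summable (fun k : ℕ =>
          ‖𝒜 n (n + 1 + (k : ℤ))
            (y (n + 1 + (k : ℤ)) - P (n + 1 + (k : ℤ)) (y (n + 1 + (k : ℤ))))‖)) ∧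
      (∀ n : ℤ, x n =
        (∑' k : ℕ, 𝒜 n (n - (k : ℤ)) (P (n - (k : ℤ)) (y (n - (k : ℤ))))) -
        (∑' k : ℕ, 𝒜 n (n + 1 + (k : ℤ))
          (y (n + 1 + (k : ℤ)) - P (n + 1 + (k : ℤ)) (y (n + 1 + (k : ℤ)))))) ∧
      (∃ C, ∀ n, ‖x n‖ ≤ C) ∧
      (∀ n : ℤ, x (n + 1) - A n (x n) = y (n + 1)) := by
  obtain ⟨C, hC⟩ := hy
  have hC0 : 0 ≤ C := le_trans (norm_nonneg (y 0)) (hC 0)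
  set r : ℝ := Real.exp (-lam) with hr
  have hr0 : 0 < r := Real.exp_pos _
  have hr1 : r < 1 := Real.exp_lt_one_iff.mpr (by linarith)
  set g : ℤ → ℕ → X := fun n k => 𝒜 n (n - (k : ℤ)) (P (n - (k : ℤ)) (y (n - (k : ℤ)))) with hgdef
  set h : ℤ → ℕ → X := fun n k =>
    𝒜 n (n + 1 + (k : ℤ))
      (y (n + 1 + (k : ℤ)) - P (n + 1 + (k : ℤ)) (y (n + 1 + (k : ℤ)))) with hhdef
  -- pointwise bounds
  have hgb : ∀ n : ℤ, ∀ k : ℕ, ‖g n k‖ ≤ D * C * r ^ k := by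
    intro n k
    have h1 : ‖g n k‖ ≤ ‖(𝒜 n (n - (k : ℤ))).comp (P (n - (k : ℤ)))‖ * ‖y (n - (k : ℤ))‖ := by
      have heq : g n k = ((𝒜 n (n - (k : ℤ))).comp (P (n - (k : ℤ)))) (y (n - (k : ℤ))) := by
        simp [hgdef]
      rw [heq]; exact ContinuousLinearMap.le_opNorm _ _
    have h2 := hb1 n (n - (k : ℤ)) (by omega)
    have h3 : ((n : ℝ) - ((n - (k : ℤ) : ℤ) : ℝ)) = (k : ℝ) := by push_cast; ring
    rw [h3] at h2
    have h4 : Real.exp (-lam * (k : ℝ)) = r ^ k := by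
      rw [show (-lam * (k : ℝ)) = (k : ℝ) * (-lam) by ring, Real.exp_nat_mul]
    rw [h4] at h2
    calc ‖g n k‖ ≤ ‖(𝒜 n (n - (k : ℤ))).comp (P (n - (k : ℤ)))‖ * ‖y (n - (k : ℤ))‖ := h1
      _ ≤ (D * r ^ k) * C := by
          apply mul_le_mul h2 (hC _) (norm_nonneg _)
          positivity
      _ = D * C * r ^ k := by ring
  have hhb : ∀ n : ℤ, ∀ k : ℕ, ‖h n k‖ ≤ D * C * r ^ k := by
    intro n k
    have heq : h n k = ((𝒜 n (n + 1 + (k : ℤ))).comp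
        (ContinuousLinearMap.id ℝ X - P (n + 1 + (k : ℤ)))) (y (n + 1 + (k : ℤ))) := by
      simp [hhdef]
    have h1 : ‖h n k‖ ≤ ‖(𝒜 n (n + 1 + (k : ℤ))).comp
        (ContinuousLinearMap.id ℝ X - P (n + 1 + (k : ℤ)))‖ * ‖y (n + 1 + (k : ℤ))‖ := by
      rw [heq]; exact ContinuousLinearMap.le_opNorm _ _
    have h2 := hb2 n (n + 1 + (k : ℤ)) (by omega)
    have h3 : (((n + 1 + (k : ℤ) : ℤ) : ℝ) - (n : ℝ)) = (k : ℝ) + 1 := by push_cast; ring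
    rw [h3] at h2
    have h5 : Real.exp (-lam * ((k : ℝ) + 1)) ≤ r ^ k := by
      have : Real.exp (-lam * ((k : ℝ) + 1)) ≤ Real.exp (-lam * (k : ℝ)) := by
        apply Real.exp_le_exp.mpr
        nlinarith [Nat.cast_nonneg (α := ℝ) k]
      rw [show (-lam * (k : ℝ)) = (k : ℝ) * (-lam) by ring, Real.exp_nat_mul] at this
      exact this
    calc ‖h n k‖ ≤ _ * ‖y (n + 1 + (k : ℤ))‖ := h1
      _ ≤ (D * r ^ k) * C := by
          apply mul_le_mul (le_trans h2 (by nlinarith)) (hC _) (norm_nonneg _)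
          positivity
      _ = D * C * r ^ k := by ring
  have hgeo : Summable (fun k : ℕ => D * C * r ^ k) :=
    (summable_geometric_of_lt_one hr0.le hr1).mul_left _
  have hsg : ∀ n : ℤ, Summable (fun k : ℕ => ‖g n k‖) := fun n =>
    Summable.of_nonneg_of_le (fun k => norm_nonneg _) (hgb n) hgeo
  have hsh : ∀ n : ℤ, Summable (fun k : ℕ => ‖h n k‖) := fun n =>
    Summable.of_nonneg_of_le (fun k => norm_nonneg _) (hhb n) hgeo
  have hsg' : ∀ n : ℤ, Summable (g n) := fun n => (hsg n).of_norm
  have hsh' : ∀ n : ℤ, Summable (h n) := fun n => (hsh n).of_norm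
  refine ⟨fun n => (∑' k, g n k) - (∑' k, h n k), fun n => ⟨hsg n, hsh n⟩, fun n => rfl, ?_, ?_⟩
  · refine ⟨2 * (D * C * (1 - r)⁻¹), fun n => ?_⟩
    have hbnd : ∀ (f : ℕ → X), (∀ k, ‖f k‖ ≤ D * C * r ^ k) → Summable (fun k => ‖f k‖) →
        ‖∑' k, f k‖ ≤ D * C * (1 - r)⁻¹ := by
      intro f hf hsf
      calc ‖∑' k, f k‖ ≤ ∑' k, ‖f k‖ := norm_tsum_le_tsum_norm hsf
        _ ≤ ∑' k : ℕ, D * C * r ^ k := Summable.tsum_le_tsum hf hsf hgeo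
        _ = D * C * (1 - r)⁻¹ := by
            rw [tsum_mul_left, tsum_geometric_of_lt_one hr0.le hr1]
    calc ‖(∑' k, g n k) - (∑' k, h n k)‖ ≤ ‖∑' k, g n k‖ + ‖∑' k, h n k‖ := norm_sub_le _ _
      _ ≤ D * C * (1 - r)⁻¹ + D * C * (1 - r)⁻¹ :=
          add_le_add (hbnd _ (hgb n) (hsg n)) (hbnd _ (hhb n) (hsh n))
      _ = 2 * (D * C * (1 - r)⁻¹) := by ring
  · intro n
    have hAapp : ∀ (m : ℤ) (v : X), 𝒜 (n + 1) m v = A n (𝒜 n m v) := by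
      intro m v; rw [hco n m]; rfl
    -- g (n+1) (k+1) = A n (g n k)
    have hgshift : ∀ k : ℕ, g (n + 1) (k + 1) = A n (g n k) := by
      intro k
      have hidx : (n + 1) - ((k + 1 : ℕ) : ℤ) = n - (k : ℤ) := by push_cast; ring
      simp only [hgdef, hidx]
      exact hAapp _ _
    have hg0 : g (n + 1) 0 = P (n + 1) (y (n + 1)) := by
      simp [hgdef, hid]
    -- h (n+1) k = A n (h n (k+1))
    have hhshift : ∀ k : ℕ, h (n + 1) k = A n (h n (k + 1)) := by
      intro k
      have hidx : (n + 1) + 1 + (k : ℤ) = n + 1 + ((k + 1 : ℕ) : ℤ) := by push_cast; ring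
      simp only [hhdef]
      rw [hidx]
      exact hAapp _ _
    have hh0 : A n (h n 0) = y (n + 1) - P (n + 1) (y (n + 1)) := by
      have hidx : n + 1 + ((0 : ℕ) : ℤ) = n + 1 := by push_cast; ring
      simp only [hhdef, hidx]
      rw [← hAapp, hid]
      rfl
    -- series identities
    have hAc : Continuous (A n : X →L[ℝ] X) := (A n : X →L[ℝ] X).continuous
    have hSg : (∑' k, g (n + 1) k) = P (n + 1) (y (n + 1)) + A n (∑' k, g n k) := by
      rw [Summable.tsum_eq_zero_add (hsg' (n + 1)), hg0]
      congr 1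
      exact (tsum_congr fun k => hgshift k).trans
        ((ContinuousLinearMap.map_tsum (A n : X →L[ℝ] X) (hsg' n)).symm)
    have hTh : A n (∑' k, h n k) = (y (n + 1) - P (n + 1) (y (n + 1))) + (∑' k, h (n + 1) k) := by
      rw [Summable.tsum_eq_zero_add (hsh' n), map_add, hh0]
      congr 1
      exact (ContinuousLinearMap.map_tsum (A n : X →L[ℝ] X)
        ((summable_nat_add_iff 1).mpr (hsh' n))).trans
        (tsum_congr fun k => (hhshift k).symm)
    have hmap : A n ((∑' k, g n k) - (∑' k, h n k))
        = A n (∑' k, g n k) - A n (∑' k, h n k) := by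
      exact map_sub _ _ _
    rw [hmap,
      show (fun n => (∑' k, g n k) - (∑' k, h n k)) (n + 1)
        = (∑' k, g (n + 1) k) - (∑' k, h (n + 1) k) from rfl, hSg, hTh]
    abel
end

section
/- Assume (A_n)_{n∈ℤ} admits a generalized exponential dichotomy with constants D, λ and that the maps f_n : X → X satisfy sup_n ‖f_n‖_∞ =: M < ∞ and are c-Lipschitz. Define the operator 𝒯 on 𝒴 by (𝒯h)_n(x) = Σ_{k≤n} 𝒜(n,k)P_k f_{k-1}(𝒜(k-1,n)x + h_{k-1}(𝒜(k-1,n)x)) − Σ_{k>n} 𝒜(n,k)(Id − P_k) f_{k-1}(𝒜(k-1,n)x + h_{k-1}(𝒜(k-1,n)x)). Then 𝒯 is well-defined on 𝒴, maps 𝒴 into itself with ‖𝒯h‖_𝒴 ≤ D(1+e^{-λ})/(1−e^{-λ}) · M, and satisfies ‖𝒯h¹ − 𝒯h²‖_𝒴 ≤ cD(1+e^{-λ})/(1−e^{-λ}) · ‖h¹ − h²‖_𝒴; in particular 𝒯 is a contraction whenever cD(1+e^{-λ})/(1−e^{-λ}) < 1. -/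
/-- Membership of a sequence of maps in the space `𝒴`. -/
def MemY {X : Type*} [NormedAddCommGroup X] [NormedSpace ℝ X]
    (A : ℤ → X ≃L[ℝ] X) (S U : ℤ → Submodule ℝ X) (h : ℤ → X → X) : Prop :=
  (∀ n, Continuous (h n)) ∧
  (∀ n x, h n x ∈ S n ⊔ (U (n + 1)).map ((A n).symm.toLinearEquiv.toLinearMap)) ∧
  (∃ C, ∀ n x, ‖h n x‖ ≤ C)

/-- Term of the first (stable) series defining `𝒯h`. -/
def TT1 {X : Type*} [NormedAddCommGroup X] [NormedSpace ℝ X]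
    (𝒜 : ℤ → ℤ → X →L[ℝ] X) (P : ℤ → X →L[ℝ] X) (f : ℤ → X → X)
    (h : ℤ → X → X) (n : ℤ) (x : X) (k : ℕ) : X :=
  𝒜 n (n - (k : ℤ))
    (P (n - (k : ℤ))
      (f (n - (k : ℤ) - 1)
        (𝒜 (n - (k : ℤ) - 1) n x + h (n - (k : ℤ) - 1) (𝒜 (n - (k : ℤ) - 1) n x))))

/-- Term of the second (unstable) series defining `𝒯h`. -/
def TT2 {X : Type*} [NormedAddCommGroup X] [NormedSpace ℝ X]
    (𝒜 : ℤ → ℤ → X →L[ℝ] X) (P : ℤ → X →L[ℝ] X) (f : ℤ → X → X)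
    (h : ℤ → X → X) (n : ℤ) (x : X) (k : ℕ) : X :=
  𝒜 n (n + 1 + (k : ℤ))
    (f (n + (k : ℤ)) (𝒜 (n + (k : ℤ)) n x + h (n + (k : ℤ)) (𝒜 (n + (k : ℤ)) n x)) -
      P (n + 1 + (k : ℤ))
        (f (n + (k : ℤ)) (𝒜 (n + (k : ℤ)) n x + h (n + (k : ℤ)) (𝒜 (n + (k : ℤ)) n x))))

theorem stmt_4
    {X : Type*} [NormedAddCommGroup X] [NormedSpace ℝ X] [CompleteSpace X]
    (A : ℤ → X ≃L[ℝ] X) (𝒜 : ℤ → ℤ → X →L[ℝ] X)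
    (hid : ∀ n, 𝒜 n n = ContinuousLinearMap.id ℝ X)
    (hco : ∀ m n, 𝒜 (m + 1) n = (A m : X →L[ℝ] X).comp (𝒜 m n))
    (S U : ℤ → Submodule ℝ X)
    (hScl : ∀ n, IsClosed (S n : Set X)) (hUcl : ∀ n, IsClosed (U n : Set X))
    (hcompl : ∀ n, IsCompl (S n) (U n))
    (hSinv : ∀ n, ∀ x ∈ S n, A n x ∈ S (n + 1))
    (hUinv : ∀ n, ∀ x ∈ U (n + 1), (A n).symm x ∈ U n)
    (P : ℤ → X →L[ℝ] X)
    (hPran : ∀ n x, P n x ∈ S n)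
    (hPS : ∀ n, ∀ x ∈ S n, P n x = x)
    (hPU : ∀ n, ∀ x ∈ U n, P n x = 0)
    (D lam : ℝ) (hD : 0 < D) (hlam : 0 < lam)
    (hb1 : ∀ m n, n ≤ m →
      ‖(𝒜 m n).comp (P n)‖ ≤ D * Real.exp (-lam * ((m : ℝ) - (n : ℝ))))
    (hb2 : ∀ m n, m ≤ n →
      ‖(𝒜 m n).comp (ContinuousLinearMap.id ℝ X - P n)‖ ≤
        D * Real.exp (-lam * ((n : ℝ) - (m : ℝ))))
    (f : ℤ → X → X) (c M : ℝ) (hc : 0 ≤ c)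
    (hflip : ∀ n x y, ‖f n x - f n y‖ ≤ c * ‖x - y‖)
    (hfbdd : ∀ n x, ‖f n x‖ ≤ M)
    (T : (ℤ → X → X) → (ℤ → X → X))
    (hT : ∀ h n x, T h n x =
      (∑' k : ℕ, 𝒜 n (n - (k : ℤ))
        (P (n - (k : ℤ))
          (f (n - (k : ℤ) - 1)
            (𝒜 (n - (k : ℤ) - 1) n x + h (n - (k : ℤ) - 1) (𝒜 (n - (k : ℤ) - 1) n x))))) -
      (∑' k : ℕ,
        𝒜 n (n + 1 + (k : ℤ))
          (f (n + (k : ℤ)) (𝒜 (n + (k : ℤ)) n x + h (n + (k : ℤ)) (𝒜 (n + (k : ℤ)) n x)) -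
            P (n + 1 + (k : ℤ))
              (f (n + (k : ℤ)) (𝒜 (n + (k : ℤ)) n x + h (n + (k : ℤ)) (𝒜 (n + (k : ℤ)) n x)))))) :
    (∀ h : ℤ → X → X, MemY A S U h →
      MemY A S U (T h) ∧
      ∀ n x, ‖T h n x‖ ≤ D * (1 + Real.exp (-lam)) / (1 - Real.exp (-lam)) * M) ∧
    (∀ h₁ h₂ : ℤ → X → X, MemY A S U h₁ → MemY A S U h₂ →
      ∀ δ : ℝ, (∀ n x, ‖h₁ n x - h₂ n x‖ ≤ δ) →
        ∀ n x, ‖T h₁ n x - T h₂ n x‖ ≤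
          c * D * (1 + Real.exp (-lam)) / (1 - Real.exp (-lam)) * δ) := by
  have hM : 0 ≤ M := le_trans (norm_nonneg _) (hfbdd 0 0)
  set r := Real.exp (-lam) with hrdef
  have hr0 : 0 ≤ r := (Real.exp_pos _).le
  have hr1 : r < 1 := by rw [hrdef]; exact Real.exp_lt_one_iff.mpr (by linarith)
  have hrpos : 0 < 1 - r := by linarith
  have hgeo : Summable (fun k : ℕ => r ^ k) := summable_geometric_of_lt_one hr0 hr1
  -- restated definition of T
  have hT' : ∀ h n x, T h n x =
      (∑' k : ℕ, TT1 𝒜 P f h n x k) - ∑' k : ℕ, TT2 𝒜 P f h n x k := fun h n x => hT h n x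
  -- step-down relation
  have hdown : ∀ n m (x : X), 𝒜 n m x = (A n).symm (𝒜 (n + 1) m x) := by
    intro n m x
    rw [hco n m]
    simp
  -- cocycle property
  have hcoc : ∀ (m k : ℤ) (x : X) (n : ℤ), 𝒜 n m (𝒜 m k x) = 𝒜 n k x := by
    intro m k x n
    have key : ∀ j : ℤ, 𝒜 (m + j) m (𝒜 m k x) = 𝒜 (m + j) k x := by
      intro j
      induction j using Int.induction_on with
      | zero => simp [hid]
      | succ i ih =>
        have e : m + ((i : ℤ) + 1) = (m + (i : ℤ)) + 1 := by ring
        rw [e, hco (m + (i : ℤ)) m, hco (m + (i : ℤ)) k]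
        simp only [ContinuousLinearMap.comp_apply, ContinuousLinearMap.coe_coe]
        rw [ih]
      | pred i ih =>
        have e : m + (-(i : ℤ) - 1) + 1 = m + (-(i : ℤ)) := by ring
        rw [hdown (m + (-(i : ℤ) - 1)) m (𝒜 m k x), hdown (m + (-(i : ℤ) - 1)) k x, e, ih]
    have h1 := key (n - m)
    have e : m + (n - m) = n := by ring
    rwa [e] at h1
  have hstep2 : ∀ (n m : ℤ) (x : X), 𝒜 n (m + 1) x = 𝒜 n m ((A m).symm x) := by
    intro n m x
    have h1 : 𝒜 m (m + 1) x = (A m).symm x := by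
      rw [hdown m (m + 1) x, hid]; simp
    rw [← hcoc m (m + 1) x n, h1]
  -- forward invariance of S
  have hSfor : ∀ (m n : ℤ), m ≤ n → ∀ x ∈ S m, 𝒜 n m x ∈ S n := by
    intro m
    refine fun n hmn => Int.le_induction (motive := fun n _ => ∀ x ∈ S m, 𝒜 n m x ∈ S n) ?_ ?_ n hmn
    · intro x hx; rw [hid]; simpa using hx
    · intro n hn ih x hx
      rw [hco n m]
      simpa using hSinv n _ (ih x hx)
  -- backward invariance of U
  have hUfor : ∀ (n m : ℤ), n ≤ m → ∀ x ∈ U m, 𝒜 n m x ∈ U n := by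
    intro n
    refine fun m hnm => Int.le_induction (motive := fun m _ => ∀ x ∈ U m, 𝒜 n m x ∈ U n) ?_ ?_ m hnm
    · intro x hx; rw [hid]; simpa using hx
    · intro m hm ih x hx
      rw [hstep2 n m x]
      exact ih _ (hUinv m x hx)
  -- complement projection
  have hsubU : ∀ (n : ℤ) (x : X), x - P n x ∈ U n := by
    intro n x
    have hx : x ∈ S n ⊔ U n := by rw [(hcompl n).sup_eq_top]; trivial
    obtain ⟨s, hs, u, hu, hsu⟩ := Submodule.mem_sup.mp hx
    have hP : P n x = s := by
      rw [← hsu, map_add, hPS n s hs, hPU n u hu, add_zero]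
    rw [hP, ← hsu]
    have e : s + u - s = u := by abel
    rw [e]; exact hu
  -- key norm estimates
  have key1 : ∀ (n : ℤ) (k : ℕ) (w : X) (B : ℝ), ‖w‖ ≤ B →
      ‖𝒜 n (n - (k : ℤ)) (P (n - (k : ℤ)) w)‖ ≤ D * B * r ^ k := by
    intro n k w B hw
    have hB : 0 ≤ B := le_trans (norm_nonneg _) hw
    have h2 := hb1 n (n - (k : ℤ)) (by omega)
    have h3 : Real.exp (-lam * ((n : ℝ) - ((n - (k : ℤ) : ℤ) : ℝ))) = r ^ k := by
      rw [hrdef, ← Real.exp_nat_mul]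
      congr 1
      push_cast
      ring
    rw [h3] at h2
    calc ‖𝒜 n (n - (k : ℤ)) (P (n - (k : ℤ)) w)‖
        = ‖((𝒜 n (n - (k : ℤ))).comp (P (n - (k : ℤ)))) w‖ := rfl
      _ ≤ ‖(𝒜 n (n - (k : ℤ))).comp (P (n - (k : ℤ)))‖ * ‖w‖ :=
          ContinuousLinearMap.le_opNorm _ w
      _ ≤ (D * r ^ k) * B := by
          apply mul_le_mul h2 hw (norm_nonneg _)
          positivity
      _ = D * B * r ^ k := by ring
  have key2 : ∀ (n : ℤ) (k : ℕ) (w : X) (B : ℝ), ‖w‖ ≤ B →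
      ‖𝒜 n (n + 1 + (k : ℤ)) (w - P (n + 1 + (k : ℤ)) w)‖ ≤ D * B * r ^ (k + 1) := by
    intro n k w B hw
    have hB : 0 ≤ B := le_trans (norm_nonneg _) hw
    have h2 := hb2 n (n + 1 + (k : ℤ)) (by omega)
    have h3 : Real.exp (-lam * (((n + 1 + (k : ℤ) : ℤ) : ℝ) - (n : ℝ))) = r ^ (k + 1) := by
      rw [hrdef, ← Real.exp_nat_mul]
      congr 1
      push_cast
      ring
    rw [h3] at h2
    have heq : 𝒜 n (n + 1 + (k : ℤ)) (w - P (n + 1 + (k : ℤ)) w) =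
        ((𝒜 n (n + 1 + (k : ℤ))).comp (ContinuousLinearMap.id ℝ X - P (n + 1 + (k : ℤ)))) w := by
      simp
    rw [heq]
    calc ‖((𝒜 n (n + 1 + (k : ℤ))).comp (ContinuousLinearMap.id ℝ X - P (n + 1 + (k : ℤ)))) w‖
        ≤ ‖(𝒜 n (n + 1 + (k : ℤ))).comp (ContinuousLinearMap.id ℝ X - P (n + 1 + (k : ℤ)))‖ * ‖w‖ :=
          ContinuousLinearMap.le_opNorm _ w
      _ ≤ (D * r ^ (k + 1)) * B := by
          apply mul_le_mul h2 hw (norm_nonneg _)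
          positivity
      _ = D * B * r ^ (k + 1) := by ring
  -- term bounds
  have hTT1bd : ∀ h n x k, ‖TT1 𝒜 P f h n x k‖ ≤ D * M * r ^ k := by
    intro h n x k
    exact key1 n k _ M (hfbdd _ _)
  have hTT2bd : ∀ h n x k, ‖TT2 𝒜 P f h n x k‖ ≤ D * M * r ^ (k + 1) := by
    intro h n x k
    exact key2 n k _ M (hfbdd _ _)
  -- summability
  have hgeoB : ∀ B : ℝ, Summable (fun k : ℕ => D * B * r ^ k) := fun B => hgeo.mul_left (D * B)
  have hgeoB2 : ∀ B : ℝ, Summable (fun k : ℕ => D * B * r ^ (k + 1)) := by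
    intro B
    refine (hgeo.mul_left (D * B * r)).congr fun k => ?_
    rw [pow_succ]; ring
  have hs1 : ∀ h n x, Summable (TT1 𝒜 P f h n x) := fun h n x =>
    Summable.of_norm_bounded (hgeoB M) (hTT1bd h n x)
  have hs2 : ∀ h n x, Summable (TT2 𝒜 P f h n x) := fun h n x =>
    Summable.of_norm_bounded (hgeoB2 M) (hTT2bd h n x)
  -- geometric sums
  have tsum_geo1 : ∀ B : ℝ, ∑' k : ℕ, D * B * r ^ k = D * B * (1 - r)⁻¹ := by
    intro B; rw [tsum_mul_left, tsum_geometric_of_lt_one hr0 hr1]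
  have tsum_geo2 : ∀ B : ℝ, ∑' k : ℕ, D * B * r ^ (k + 1) = D * B * r * (1 - r)⁻¹ := by
    intro B
    have e : ∀ k : ℕ, D * B * r ^ (k + 1) = D * B * r * r ^ k := fun k => by
      rw [pow_succ]; ring
    rw [tsum_congr e, tsum_mul_left, tsum_geometric_of_lt_one hr0 hr1]
  -- main estimate
  have main : ∀ (u v : ℕ → X) (B : ℝ), 0 ≤ B →
      (∀ k, ‖u k‖ ≤ D * B * r ^ k) → (∀ k, ‖v k‖ ≤ D * B * r ^ (k + 1)) →
      ‖(∑' k, u k) - ∑' k, v k‖ ≤ D * (1 + r) / (1 - r) * B := by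
    intro u v B hB hu hv
    have hnu : Summable fun k => ‖u k‖ :=
      Summable.of_nonneg_of_le (fun _ => norm_nonneg _) hu (hgeoB B)
    have hnv : Summable fun k => ‖v k‖ :=
      Summable.of_nonneg_of_le (fun _ => norm_nonneg _) hv (hgeoB2 B)
    calc ‖(∑' k, u k) - ∑' k, v k‖
        ≤ ‖∑' k, u k‖ + ‖∑' k, v k‖ := norm_sub_le _ _
      _ ≤ (∑' k, ‖u k‖) + ∑' k, ‖v k‖ :=
          add_le_add (norm_tsum_le_tsum_norm hnu) (norm_tsum_le_tsum_norm hnv)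
      _ ≤ (∑' k : ℕ, D * B * r ^ k) + ∑' k : ℕ, D * B * r ^ (k + 1) :=
          add_le_add (Summable.tsum_le_tsum hu hnu (hgeoB B)) (Summable.tsum_le_tsum hv hnv (hgeoB2 B))
      _ = D * (1 + r) / (1 - r) * B := by
          rw [tsum_geo1, tsum_geo2]
          field_simp
  -- continuity of f
  have hfc : ∀ m, Continuous (f m) := by
    intro m
    refine (LipschitzWith.of_dist_le_mul (K := ⟨c, hc⟩) fun x y => ?_).continuous
    simp only [dist_eq_norm, NNReal.coe_mk]
    exact hflip m x y
  constructor
  · intro h hmem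
    obtain ⟨hc1, hc2, C, hc3⟩ := hmem
    have hbound : ∀ n x, ‖T h n x‖ ≤ D * (1 + r) / (1 - r) * M := by
      intro n x
      rw [hT' h n x]
      exact main _ _ M hM (hTT1bd h n x) (hTT2bd h n x)
    refine ⟨⟨?_, ?_, ⟨D * (1 + r) / (1 - r) * M, hbound⟩⟩, hbound⟩
    · -- continuity
      intro n
      have e : T h n = fun x => (∑' k : ℕ, TT1 𝒜 P f h n x k) - ∑' k : ℕ, TT2 𝒜 P f h n x k :=
        funext fun x => hT' h n x
      rw [e]
      have hco1 : ∀ k : ℕ, Continuous fun x => TT1 𝒜 P f h n x k := by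
        intro k
        exact (𝒜 n (n - (k : ℤ))).continuous.comp
          ((P (n - (k : ℤ))).continuous.comp
            ((hfc (n - (k : ℤ) - 1)).comp
              (((𝒜 (n - (k : ℤ) - 1) n).continuous).add
                ((hc1 (n - (k : ℤ) - 1)).comp (𝒜 (n - (k : ℤ) - 1) n).continuous))))
      have hco2 : ∀ k : ℕ, Continuous fun x => TT2 𝒜 P f h n x k := by
        intro k
        have hw : Continuous fun x =>
            f (n + (k : ℤ)) (𝒜 (n + (k : ℤ)) n x + h (n + (k : ℤ)) (𝒜 (n + (k : ℤ)) n x)) :=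
          (hfc (n + (k : ℤ))).comp
            (((𝒜 (n + (k : ℤ)) n).continuous).add
              ((hc1 (n + (k : ℤ))).comp (𝒜 (n + (k : ℤ)) n).continuous))
        exact (𝒜 n (n + 1 + (k : ℤ))).continuous.comp
          (hw.sub ((P (n + 1 + (k : ℤ))).continuous.comp hw))
      exact (continuous_tsum hco1 (hgeoB M) fun k x => hTT1bd h n x k).sub
        (continuous_tsum hco2 (hgeoB2 M) fun k x => hTT2bd h n x k)
    · -- range condition
      intro n x
      rw [hT' h n x]
      have m1 : (∑' k : ℕ, TT1 𝒜 P f h n x k) ∈ S n := by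
        refine (hScl n).mem_of_tendsto (hs1 h n x).hasSum
          (Filter.Eventually.of_forall fun s => sum_mem fun k _ => ?_)
        exact hSfor (n - (k : ℤ)) n (by omega) _ (hPran _ _)
      have m2 : (∑' k : ℕ, TT2 𝒜 P f h n x k) ∈
          (U (n + 1)).map ((A n).symm.toLinearEquiv.toLinearMap) := by
        have hHS : HasSum (fun k => (A n : X →L[ℝ] X) (TT2 𝒜 P f h n x k))
            ((A n : X →L[ℝ] X) (∑' k, TT2 𝒜 P f h n x k)) :=
          (hs2 h n x).hasSum.mapL _
        have hmemU : ∀ k : ℕ, (A n : X →L[ℝ] X) (TT2 𝒜 P f h n x k) ∈ U (n + 1) := by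
          intro k
          have e : (A n : X →L[ℝ] X) (TT2 𝒜 P f h n x k) =
              𝒜 (n + 1) (n + 1 + (k : ℤ))
                (f (n + (k : ℤ)) (𝒜 (n + (k : ℤ)) n x + h (n + (k : ℤ)) (𝒜 (n + (k : ℤ)) n x)) -
                  P (n + 1 + (k : ℤ))
                    (f (n + (k : ℤ)) (𝒜 (n + (k : ℤ)) n x +
                      h (n + (k : ℤ)) (𝒜 (n + (k : ℤ)) n x)))) := by
            rw [TT2, hco n (n + 1 + (k : ℤ))]
            simp
          rw [e]
          exact hUfor (n + 1) (n + 1 + (k : ℤ)) (by omega) _ (hsubU _ _)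
        have hU : (A n : X →L[ℝ] X) (∑' k, TT2 𝒜 P f h n x k) ∈ U (n + 1) := by
          refine (hUcl (n + 1)).mem_of_tendsto hHS
            (Filter.Eventually.of_forall fun s => sum_mem fun k _ => hmemU k)
        refine Submodule.mem_map.mpr ⟨(A n : X →L[ℝ] X) (∑' k, TT2 𝒜 P f h n x k), hU, ?_⟩
        exact (A n).symm_apply_apply _
      exact sub_mem (Submodule.mem_sup_left m1) (Submodule.mem_sup_right m2)
  · -- Lipschitz estimate
    intro h₁ h₂ _ _ δ hδ n x
    have hδ0 : 0 ≤ δ := le_trans (norm_nonneg _) (hδ 0 0)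
    rw [hT' h₁ n x, hT' h₂ n x]
    have e : ((∑' k : ℕ, TT1 𝒜 P f h₁ n x k) - ∑' k : ℕ, TT2 𝒜 P f h₁ n x k) -
        ((∑' k : ℕ, TT1 𝒜 P f h₂ n x k) - ∑' k : ℕ, TT2 𝒜 P f h₂ n x k) =
        (∑' k : ℕ, (TT1 𝒜 P f h₁ n x k - TT1 𝒜 P f h₂ n x k)) -
        ∑' k : ℕ, (TT2 𝒜 P f h₁ n x k - TT2 𝒜 P f h₂ n x k) := by
      rw [Summable.tsum_sub (hs1 h₁ n x) (hs1 h₂ n x), Summable.tsum_sub (hs2 h₁ n x) (hs2 h₂ n x)]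
      abel
    rw [e]
    have hwd : ∀ (m : ℤ) (a : X),
        ‖f m (a + h₁ m a) - f m (a + h₂ m a)‖ ≤ c * δ := by
      intro m a
      calc ‖f m (a + h₁ m a) - f m (a + h₂ m a)‖
          ≤ c * ‖(a + h₁ m a) - (a + h₂ m a)‖ := hflip m _ _
        _ = c * ‖h₁ m a - h₂ m a‖ := by rw [add_sub_add_left_eq_sub]
        _ ≤ c * δ := mul_le_mul_of_nonneg_left (hδ m a) hc
    have hu : ∀ k, ‖TT1 𝒜 P f h₁ n x k - TT1 𝒜 P f h₂ n x k‖ ≤ D * (c * δ) * r ^ k := by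
      intro k
      have e1 : TT1 𝒜 P f h₁ n x k - TT1 𝒜 P f h₂ n x k =
          𝒜 n (n - (k : ℤ)) (P (n - (k : ℤ))
            (f (n - (k : ℤ) - 1)
              (𝒜 (n - (k : ℤ) - 1) n x + h₁ (n - (k : ℤ) - 1) (𝒜 (n - (k : ℤ) - 1) n x)) -
             f (n - (k : ℤ) - 1)
              (𝒜 (n - (k : ℤ) - 1) n x + h₂ (n - (k : ℤ) - 1) (𝒜 (n - (k : ℤ) - 1) n x)))) := by
        rw [TT1, TT1, map_sub, map_sub]
      rw [e1]
      exact key1 n k _ (c * δ) (hwd _ _)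
    have hv : ∀ k, ‖TT2 𝒜 P f h₁ n x k - TT2 𝒜 P f h₂ n x k‖ ≤ D * (c * δ) * r ^ (k + 1) := by
      intro k
      set w₁ := f (n + (k : ℤ)) (𝒜 (n + (k : ℤ)) n x + h₁ (n + (k : ℤ)) (𝒜 (n + (k : ℤ)) n x))
        with hw₁
      set w₂ := f (n + (k : ℤ)) (𝒜 (n + (k : ℤ)) n x + h₂ (n + (k : ℤ)) (𝒜 (n + (k : ℤ)) n x))
        with hw₂
      have e1 : TT2 𝒜 P f h₁ n x k - TT2 𝒜 P f h₂ n x k =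
          𝒜 n (n + 1 + (k : ℤ)) ((w₁ - w₂) - P (n + 1 + (k : ℤ)) (w₁ - w₂)) := by
        rw [TT2, TT2, ← map_sub, map_sub (P (n + 1 + (k : ℤ)))]
        congr 1
        abel
      rw [e1]
      exact key2 n k _ (c * δ) (hwd _ _)
    calc ‖(∑' k : ℕ, (TT1 𝒜 P f h₁ n x k - TT1 𝒜 P f h₂ n x k)) -
          ∑' k : ℕ, (TT2 𝒜 P f h₁ n x k - TT2 𝒜 P f h₂ n x k)‖
        ≤ D * (1 + r) / (1 - r) * (c * δ) := main _ _ (c * δ) (by positivity) hu hv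
      _ = c * D * (1 + r) / (1 - r) * δ := by ring
end

section
/- Let h = (h_n)_{n∈ℤ} be the unique fixed point of the contraction 𝒯 from the generalized Grobman–Hartman construction, and set H_n = Id + h_n. Then H_{n+1}(A_n x) = A_n H_n(x) + f_n(H_n(x)) for all n ∈ ℤ and x ∈ X; i.e., H_{n+1} ∘ A_n = (A_n + f_n) ∘ H_n. -/
private lemma aux_coc {X : Type*} [NormedAddCommGroup X] [NormedSpace ℝ X]
    (A : ℤ → X ≃L[ℝ] X) (𝒜 : ℤ → ℤ → X →L[ℝ] X)
    (hid : ∀ n, 𝒜 n n = ContinuousLinearMap.id ℝ X)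
    (hco : ∀ m n, 𝒜 (m + 1) n = (A m : X →L[ℝ] X).comp (𝒜 m n)) :
    ∀ (m n : ℤ) (x : X), 𝒜 m (n + 1) (A n x) = 𝒜 m n x := by
  intro m n x
  induction m using Int.inductionOn' with
  | b => exact n + 1
  | zero => simp [hid, hco n n]
  | succ k hk ih =>
      rw [hco k (n + 1), hco k n]
      simp [ih]
  | pred k hk ih =>
      have h2 : 𝒜 k (n + 1) = (A (k - 1) : X →L[ℝ] X).comp (𝒜 (k - 1) (n + 1)) := by
        have := hco (k - 1) (n + 1); rwa [sub_add_cancel] at this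
      have h3 : 𝒜 k n = (A (k - 1) : X →L[ℝ] X).comp (𝒜 (k - 1) n) := by
        have := hco (k - 1) n; rwa [sub_add_cancel] at this
      apply (A (k - 1)).injective
      have := ih
      rw [h2, h3] at this
      simpa using this

private lemma aux_sum1 {X : Type*} [NormedAddCommGroup X] [NormedSpace ℝ X] [CompleteSpace X]
    (𝒜 : ℤ → ℤ → X →L[ℝ] X) (P : ℤ → X →L[ℝ] X) (D lam M : ℝ)
    (hlam : 0 < lam) (hM : 0 ≤ M) (hD : 0 ≤ D)
    (hb1 : ∀ m n, n ≤ m →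
      ‖(𝒜 m n).comp (P n)‖ ≤ D * Real.exp (-lam * ((m : ℝ) - (n : ℝ))))
    (a b : ℤ) (hab : b ≤ a) (w : ℕ → X) (hw : ∀ k, ‖w k‖ ≤ M) :
    Summable (fun k : ℕ => 𝒜 a (b - (k : ℤ)) (P (b - (k : ℤ)) (w k))) := by
  have hexp : Real.exp (-lam) < 1 := Real.exp_lt_one_iff.mpr (by linarith)
  apply Summable.of_norm_bounded (g := fun k : ℕ => D * M * Real.exp (-lam) ^ k)
    ((summable_geometric_of_lt_one (Real.exp_nonneg _) hexp).mul_left _)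
  intro k
  have h1 : ‖𝒜 a (b - (k : ℤ)) (P (b - (k : ℤ)) (w k))‖ ≤
      ‖(𝒜 a (b - (k : ℤ))).comp (P (b - (k : ℤ)))‖ * ‖w k‖ :=
    ((𝒜 a (b - (k : ℤ))).comp (P (b - (k : ℤ)))).le_opNorm (w k)
  have h2 := hb1 a (b - (k : ℤ)) (by omega)
  have hba : (b : ℝ) ≤ (a : ℝ) := by exact_mod_cast hab
  have h3 : -lam * ((a : ℝ) - ((b - (k : ℤ) : ℤ) : ℝ)) ≤ (k : ℕ) * (-lam) := by
    push_cast
    nlinarith [Nat.cast_nonneg (α := ℝ) k]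
  have h4 : Real.exp (-lam * ((a : ℝ) - ((b - (k : ℤ) : ℤ) : ℝ))) ≤ Real.exp (-lam) ^ k := by
    rw [← Real.exp_nat_mul]
    exact Real.exp_le_exp.mpr h3
  calc ‖𝒜 a (b - (k : ℤ)) (P (b - (k : ℤ)) (w k))‖
      ≤ ‖(𝒜 a (b - (k : ℤ))).comp (P (b - (k : ℤ)))‖ * ‖w k‖ := h1
    _ ≤ (D * Real.exp (-lam) ^ k) * M := by
        apply mul_le_mul _ (hw k) (norm_nonneg _)
          (mul_nonneg hD (pow_nonneg (Real.exp_nonneg _) _))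
        calc ‖(𝒜 a (b - (k : ℤ))).comp (P (b - (k : ℤ)))‖
            ≤ D * Real.exp (-lam * ((a : ℝ) - ((b - (k : ℤ) : ℤ) : ℝ))) := h2
          _ ≤ D * Real.exp (-lam) ^ k := mul_le_mul_of_nonneg_left h4 hD
    _ = D * M * Real.exp (-lam) ^ k := by ring

private lemma aux_sum2 {X : Type*} [NormedAddCommGroup X] [NormedSpace ℝ X] [CompleteSpace X]
    (𝒜 : ℤ → ℤ → X →L[ℝ] X) (P : ℤ → X →L[ℝ] X) (D lam M : ℝ)
    (hlam : 0 < lam) (hM : 0 ≤ M) (hD : 0 ≤ D)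
    (hb2 : ∀ m n, m ≤ n →
      ‖(𝒜 m n).comp (ContinuousLinearMap.id ℝ X - P n)‖ ≤
        D * Real.exp (-lam * ((n : ℝ) - (m : ℝ))))
    (a b : ℤ) (hab : a ≤ b) (w : ℕ → X) (hw : ∀ k, ‖w k‖ ≤ M) :
    Summable (fun k : ℕ => 𝒜 a (b + (k : ℤ)) (w k - P (b + (k : ℤ)) (w k))) := by
  have hexp : Real.exp (-lam) < 1 := Real.exp_lt_one_iff.mpr (by linarith)
  apply Summable.of_norm_bounded (g := fun k : ℕ => D * M * Real.exp (-lam) ^ k)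
    ((summable_geometric_of_lt_one (Real.exp_nonneg _) hexp).mul_left _)
  intro k
  have happ : 𝒜 a (b + (k : ℤ)) (w k - P (b + (k : ℤ)) (w k)) =
      ((𝒜 a (b + (k : ℤ))).comp (ContinuousLinearMap.id ℝ X - P (b + (k : ℤ)))) (w k) := by
    simp
  have h1 : ‖((𝒜 a (b + (k : ℤ))).comp (ContinuousLinearMap.id ℝ X - P (b + (k : ℤ)))) (w k)‖ ≤
      ‖(𝒜 a (b + (k : ℤ))).comp (ContinuousLinearMap.id ℝ X - P (b + (k : ℤ)))‖ * ‖w k‖ :=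
    ContinuousLinearMap.le_opNorm _ _
  have h2 := hb2 a (b + (k : ℤ)) (by omega)
  have hba : (a : ℝ) ≤ (b : ℝ) := by exact_mod_cast hab
  have h3 : -lam * (((b + (k : ℤ) : ℤ) : ℝ) - (a : ℝ)) ≤ (k : ℕ) * (-lam) := by
    push_cast
    nlinarith [Nat.cast_nonneg (α := ℝ) k]
  have h4 : Real.exp (-lam * (((b + (k : ℤ) : ℤ) : ℝ) - (a : ℝ))) ≤ Real.exp (-lam) ^ k := by
    rw [← Real.exp_nat_mul]
    exact Real.exp_le_exp.mpr h3
  rw [happ]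
  calc ‖((𝒜 a (b + (k : ℤ))).comp (ContinuousLinearMap.id ℝ X - P (b + (k : ℤ)))) (w k)‖
      ≤ ‖(𝒜 a (b + (k : ℤ))).comp (ContinuousLinearMap.id ℝ X - P (b + (k : ℤ)))‖ * ‖w k‖ := h1
    _ ≤ (D * Real.exp (-lam) ^ k) * M := by
        apply mul_le_mul _ (hw k) (norm_nonneg _)
          (mul_nonneg hD (pow_nonneg (Real.exp_nonneg _) _))
        calc ‖(𝒜 a (b + (k : ℤ))).comp (ContinuousLinearMap.id ℝ X - P (b + (k : ℤ)))‖
            ≤ D * Real.exp (-lam * (((b + (k : ℤ) : ℤ) : ℝ) - (a : ℝ))) := h2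
          _ ≤ D * Real.exp (-lam) ^ k := mul_le_mul_of_nonneg_left h4 hD
    _ = D * M * Real.exp (-lam) ^ k := by ring

theorem stmt_5
    {X : Type*} [NormedAddCommGroup X] [NormedSpace ℝ X] [CompleteSpace X]
    (A : ℤ → X ≃L[ℝ] X) (𝒜 : ℤ → ℤ → X →L[ℝ] X)
    (hid : ∀ n, 𝒜 n n = ContinuousLinearMap.id ℝ X)
    (hco : ∀ m n, 𝒜 (m + 1) n = (A m : X →L[ℝ] X).comp (𝒜 m n))
    (S U : ℤ → Submodule ℝ X)
    (hScl : ∀ n, IsClosed (S n : Set X)) (hUcl : ∀ n, IsClosed (U n : Set X))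
    (hcompl : ∀ n, IsCompl (S n) (U n))
    (hSinv : ∀ n, ∀ x ∈ S n, A n x ∈ S (n + 1))
    (hUinv : ∀ n, ∀ x ∈ U (n + 1), (A n).symm x ∈ U n)
    (P : ℤ → X →L[ℝ] X)
    (hPran : ∀ n x, P n x ∈ S n)
    (hPS : ∀ n, ∀ x ∈ S n, P n x = x)
    (hPU : ∀ n, ∀ x ∈ U n, P n x = 0)
    (D lam : ℝ) (hD : 0 < D) (hlam : 0 < lam)
    (hb1 : ∀ m n, n ≤ m →
      ‖(𝒜 m n).comp (P n)‖ ≤ D * Real.exp (-lam * ((m : ℝ) - (n : ℝ))))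
    (hb2 : ∀ m n, m ≤ n →
      ‖(𝒜 m n).comp (ContinuousLinearMap.id ℝ X - P n)‖ ≤
        D * Real.exp (-lam * ((n : ℝ) - (m : ℝ))))
    (f : ℤ → X → X) (c M : ℝ) (hc : 0 ≤ c)
    (hflip : ∀ n x y, ‖f n x - f n y‖ ≤ c * ‖x - y‖)
    (hfbdd : ∀ n x, ‖f n x‖ ≤ M)
    (hsmall : c * D * (1 + Real.exp (-lam)) / (1 - Real.exp (-lam)) < 1)
    (h : ℤ → X → X) (hmem : MemY A S U h)
    -- h is a fixed point of the operator 𝒯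
    (hfix : ∀ n x, h n x =
      (∑' k : ℕ, 𝒜 n (n - (k : ℤ))
        (P (n - (k : ℤ))
          (f (n - (k : ℤ) - 1)
            (𝒜 (n - (k : ℤ) - 1) n x + h (n - (k : ℤ) - 1) (𝒜 (n - (k : ℤ) - 1) n x))))) -
      (∑' k : ℕ,
        𝒜 n (n + 1 + (k : ℤ))
          (f (n + (k : ℤ)) (𝒜 (n + (k : ℤ)) n x + h (n + (k : ℤ)) (𝒜 (n + (k : ℤ)) n x)) -
            P (n + 1 + (k : ℤ))
              (f (n + (k : ℤ)) (𝒜 (n + (k : ℤ)) n x + h (n + (k : ℤ)) (𝒜 (n + (k : ℤ)) n x)))))) :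
    -- H_{n+1} ∘ A_n = (A_n + f_n) ∘ H_n, where H_n = Id + h_n
    ∀ (n : ℤ) (x : X),
      A n x + h (n + 1) (A n x) = A n (x + h n x) + f n (x + h n x) := by
  intro n x
  have hcoc : ∀ (m : ℤ) (y : X), 𝒜 m (n + 1) (A n y) = 𝒜 m n y :=
    fun m y => aux_coc A 𝒜 hid hco m n y
  have hM0 : 0 ≤ M := le_trans (norm_nonneg _) (hfbdd 0 0)
  have hD0 : 0 ≤ D := hD.le
  set g : ℤ → X := fun m => f m (𝒜 m n x + h m (𝒜 m n x)) with hgdef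
  have hg : ∀ m : ℤ, f m (𝒜 m n x + h m (𝒜 m n x)) = g m := fun m => rfl
  have hgM : ∀ m : ℤ, ‖g m‖ ≤ M := fun m => hfbdd _ _
  -- summability of the four series involved
  have hS1 : Summable (fun k : ℕ => 𝒜 n (n - (k : ℤ)) (P (n - (k : ℤ)) (g (n - (k : ℤ) - 1)))) :=
    aux_sum1 𝒜 P D lam M hlam hM0 hD0 hb1 n n le_rfl _ (fun k => hgM _)
  have hS2 : Summable (fun k : ℕ =>
      𝒜 n (n + 1 + (k : ℤ)) (g (n + (k : ℤ)) - P (n + 1 + (k : ℤ)) (g (n + (k : ℤ))))) :=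
    aux_sum2 𝒜 P D lam M hlam hM0 hD0 hb2 n (n + 1) (by omega) _ (fun k => hgM _)
  have hS1' : Summable (fun k : ℕ =>
      𝒜 (n + 1) (n + 1 - (k : ℤ)) (P (n + 1 - (k : ℤ)) (g (n - (k : ℤ))))) :=
    aux_sum1 𝒜 P D lam M hlam hM0 hD0 hb1 (n + 1) (n + 1) le_rfl _ (fun k => hgM _)
  have hS2A : Summable (fun k : ℕ =>
      𝒜 (n + 1) (n + 1 + (k : ℤ)) (g (n + (k : ℤ)) - P (n + 1 + (k : ℤ)) (g (n + (k : ℤ))))) :=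
    aux_sum2 𝒜 P D lam M hlam hM0 hD0 hb2 (n + 1) (n + 1) le_rfl _ (fun k => hgM _)
  -- the two instances of the fixed point equation
  have key0 := hfix n x
  have key1 := hfix (n + 1) (A n x)
  simp only [hg] at key0
  have e1 : ∀ k : ℕ, n + 1 - (k : ℤ) - 1 = n - (k : ℤ) := fun k => by ring
  have e2 : ∀ k : ℕ, n + 1 + 1 + (k : ℤ) = n + 2 + (k : ℤ) := fun k => by ring
  simp only [hcoc, e1, e2, hg] at key1
  -- applying `A n` termwise
  have hco' : ∀ (m : ℤ) (v : X), A n (𝒜 n m v) = 𝒜 (n + 1) m v := by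
    intro m v; rw [hco n m]; rfl
  have m1 : A n (∑' k : ℕ, 𝒜 n (n - (k : ℤ)) (P (n - (k : ℤ)) (g (n - (k : ℤ) - 1)))) =
      ∑' k : ℕ, A n (𝒜 n (n - (k : ℤ)) (P (n - (k : ℤ)) (g (n - (k : ℤ) - 1)))) :=
    (A n : X →L[ℝ] X).map_tsum hS1
  have m2 : A n (∑' k : ℕ,
        𝒜 n (n + 1 + (k : ℤ)) (g (n + (k : ℤ)) - P (n + 1 + (k : ℤ)) (g (n + (k : ℤ))))) =
      ∑' k : ℕ,
        A n (𝒜 n (n + 1 + (k : ℤ)) (g (n + (k : ℤ)) - P (n + 1 + (k : ℤ)) (g (n + (k : ℤ))))) :=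
    (A n : X →L[ℝ] X).map_tsum hS2
  have hAh : A n (h n x) =
      (∑' k : ℕ, 𝒜 (n + 1) (n - (k : ℤ)) (P (n - (k : ℤ)) (g (n - (k : ℤ) - 1)))) -
      (∑' k : ℕ,
        𝒜 (n + 1) (n + 1 + (k : ℤ)) (g (n + (k : ℤ)) - P (n + 1 + (k : ℤ)) (g (n + (k : ℤ))))) := by
    rw [key0, map_sub, m1, m2]
    exact congrArg₂ (· - ·) (tsum_congr fun k => hco' _ _) (tsum_congr fun k => hco' _ _)
  -- index shifting
  have e4 : ∀ k : ℕ, n + 1 - ((k : ℤ) + 1) = n - (k : ℤ) := fun k => by ring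
  have e5 : ∀ k : ℕ, n - ((k : ℤ) + 1) = n - (k : ℤ) - 1 := fun k => by ring
  have e6 : ∀ k : ℕ, n + 1 + ((k : ℤ) + 1) = n + 2 + (k : ℤ) := fun k => by ring
  have e7 : ∀ k : ℕ, n + ((k : ℤ) + 1) = n + 1 + (k : ℤ) := fun k => by ring
  have shift1 := Summable.tsum_eq_zero_add hS1'
  simp only [Nat.cast_zero, Nat.cast_add, Nat.cast_one, sub_zero, e4, e5, hid,
    ContinuousLinearMap.id_apply] at shift1
  have shift2 := Summable.tsum_eq_zero_add hS2A
  simp only [Nat.cast_zero, Nat.cast_add, Nat.cast_one, add_zero, e6, e7, hid,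
    ContinuousLinearMap.id_apply] at shift2
  have shift2' : (∑' k : ℕ,
      𝒜 (n + 1) (n + 2 + (k : ℤ)) (g (n + 1 + (k : ℤ)) - P (n + 2 + (k : ℤ)) (g (n + 1 + (k : ℤ))))) =
      (∑' k : ℕ,
        𝒜 (n + 1) (n + 1 + (k : ℤ)) (g (n + (k : ℤ)) - P (n + 1 + (k : ℤ)) (g (n + (k : ℤ))))) -
      (g n - P (n + 1) (g n)) := by
    rw [shift2]; abel
  have hgn : f n (x + h n x) = g n := by
    rw [hgdef]
    simp [hid]
  rw [map_add, hgn, key1, shift1, shift2', hAh]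
  abel
end

section
/- (Uniqueness / rigidity in the unperturbed case.) Let (A_n)_{n∈ℤ} admit a generalized exponential dichotomy and let (G_n)_{n∈ℤ} be continuous maps on X satisfying G_{n+1} ∘ A_n = A_n ∘ G_n for all n, sup_n ‖G_n − Id‖_∞ < ∞, and G_n(x) − x ∈ S(n) + A_n^{-1}U(n+1) for every n, x. Then G_n = Id for all n ∈ ℤ. -/
open Filter Topology

theorem stmt_8
    {X : Type*} [NormedAddCommGroup X] [NormedSpace ℝ X] [CompleteSpace X]
    (A : ℤ → X ≃L[ℝ] X) (𝒜 : ℤ → ℤ → X →L[ℝ] X)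
    (hid : ∀ n, 𝒜 n n = ContinuousLinearMap.id ℝ X)
    (hco : ∀ m n, 𝒜 (m + 1) n = (A m : X →L[ℝ] X).comp (𝒜 m n))
    (S U : ℤ → Submodule ℝ X)
    (hScl : ∀ n, IsClosed (S n : Set X)) (hUcl : ∀ n, IsClosed (U n : Set X))
    (hcompl : ∀ n, IsCompl (S n) (U n))
    (hSinv : ∀ n, ∀ x ∈ S n, A n x ∈ S (n + 1))
    (hUinv : ∀ n, ∀ x ∈ U (n + 1), (A n).symm x ∈ U n)
    (D lam : ℝ) (hD : 0 < D) (hlam : 0 < lam)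
    (hstab : ∀ m n, n ≤ m → ∀ x ∈ S n,
      ‖𝒜 m n x‖ ≤ D * Real.exp (-lam * ((m : ℝ) - (n : ℝ))) * ‖x‖)
    (hunst : ∀ m n, m ≤ n → ∀ x ∈ U n,
      ‖𝒜 m n x‖ ≤ D * Real.exp (-lam * ((n : ℝ) - (m : ℝ))) * ‖x‖)
    (P : ℤ → X →L[ℝ] X)
    (hPran : ∀ n x, P n x ∈ S n)
    (hPS : ∀ n, ∀ x ∈ S n, P n x = x)
    (hPU : ∀ n, ∀ x ∈ U n, P n x = 0)
    (hPbdd : ∃ C, ∀ n, ‖P n‖ ≤ C)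
    (G : ℤ → X → X)
    (hGcont : ∀ n, Continuous (G n))
    (hGconj : ∀ (n : ℤ) (x : X), G (n + 1) (A n x) = A n (G n x))
    (hGbdd : ∃ C, ∀ (n : ℤ) (x : X), ‖G n x - x‖ ≤ C)
    (hGmem : ∀ (n : ℤ) (x : X),
      G n x - x ∈ S n ⊔ (U (n + 1)).map ((A n).symm.toLinearEquiv.toLinearMap)) :
    ∀ (n : ℤ) (x : X), G n x = x := by
  -- master lemma: a sequence satisfying the recursion is determined by the cocycle
  have key : ∀ (f : ℤ → X), (∀ k, f (k + 1) = A k (f k)) → ∀ m k, f k = 𝒜 k m (f m) := by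
    intro f hf m k
    refine Int.inductionOn' k m ?_ ?_ ?_
    · simp [hid]
    · intro k _ ih
      rw [hf k, ih, hco]
      simp
    · intro k _ ih
      apply (A (k - 1)).injective
      have h1 : f (k - 1 + 1) = A (k - 1) (f (k - 1)) := hf (k - 1)
      have h2 : 𝒜 (k - 1 + 1) m (f m) = A (k - 1) (𝒜 (k - 1) m (f m)) := by
        rw [hco]; simp
      rw [← h1, ← h2, sub_add_cancel, ih]
  intro n x
  obtain ⟨C, hC⟩ := hGbdd
  obtain ⟨C', hC'⟩ := hPbdd
  set z : X := G n x - x with hz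
  -- the trajectory of x
  set y : ℤ → X := fun m => 𝒜 m n x with hy
  have hyrec : ∀ k, y (k + 1) = A k (y k) := by
    intro k; simp only [hy]; rw [hco]; simp
  -- conjugacy along trajectory
  have hconj : ∀ m, G m (y m) = 𝒜 m n (G n x) := by
    have := key (fun m => G m (y m)) (by
      intro k
      show G (k + 1) (y (k + 1)) = A k (G k (y k))
      rw [hyrec k, hGconj]) n
    intro m
    have h := this m
    change G m (y m) = 𝒜 m n (G n (y n)) at h
    rw [h]
    congr 1
    simp [hy, hid]
  -- the trajectory of z
  set zz : ℤ → X := fun m => 𝒜 m n z with hzz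
  have hzzrec : ∀ k, zz (k + 1) = A k (zz k) := by
    intro k; simp only [hzz]; rw [hco]; simp
  have hzzG : ∀ m, zz m = G m (y m) - y m := by
    intro m
    simp only [hzz, hz]
    rw [map_sub, ← hconj m]
  have hzzbdd : ∀ m, ‖zz m‖ ≤ C := by
    intro m; rw [hzzG m]; exact hC m (y m)
  -- decomposition of the trajectory
  set s : ℤ → X := fun m => P m (zz m) with hs
  set u : ℤ → X := fun m => zz m - s m with hu
  have hsS : ∀ m, s m ∈ S m := fun m => hPran m (zz m)
  -- u m comes from hGmem: u m ∈ U m and A m (u m) ∈ U (m+1)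
  have huU : ∀ m, u m ∈ U m ∧ A m (u m) ∈ U (m + 1) := by
    intro m
    have hmem := hGmem m (y m)
    rw [← hzzG m] at hmem
    rcases Submodule.mem_sup.mp hmem with ⟨a, ha, b, hb, hab⟩
    rcases Submodule.mem_map.mp hb with ⟨v, hv, hbv⟩
    have hbv' : (A m).symm v = b := hbv
    have hbU : b ∈ U m := by rw [← hbv']; exact hUinv m v hv
    have hPa : P m a = a := hPS m a ha
    have hPb : P m b = 0 := hPU m b hbU
    have hsa : s m = a := by
      simp only [hs]
      rw [← hab, map_add, hPa, hPb, add_zero]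
    have hub : u m = b := by
      simp only [hu, hsa, ← hab]
      abel
    constructor
    · rw [hub]; exact hbU
    · rw [hub, ← hbv']
      simpa using hv
  -- recursions for s and u
  have hsrec : ∀ k, s (k + 1) = A k (s k) := by
    intro k
    have h0 : zz k = s k + u k := by simp only [hu]; abel
    have h1 : zz (k + 1) = A k (s k) + A k (u k) := by
      rw [hzzrec k, h0, map_add]
    calc s (k + 1) = P (k + 1) (zz (k + 1)) := rfl
    _ = P (k + 1) (A k (s k)) + P (k + 1) (A k (u k)) := by rw [h1, map_add]
    _ = A k (s k) + 0 := by
        rw [hPS (k + 1) _ (hSinv k (s k) (hsS k)), hPU (k + 1) _ (huU k).2]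
    _ = A k (s k) := add_zero _
  have hurec : ∀ k, u (k + 1) = A k (u k) := by
    intro k
    simp only [hu]
    rw [hzzrec k, hsrec k, ← map_sub]
  -- bounds
  have hC0 : 0 ≤ C := le_trans (norm_nonneg _) (hC 0 0)
  have hsbdd : ∀ m, ‖s m‖ ≤ C' * C := by
    intro m
    calc ‖P m (zz m)‖ ≤ ‖P m‖ * ‖zz m‖ := (P m).le_opNorm _
    _ ≤ C' * C := by
        apply mul_le_mul (hC' m) (hzzbdd m) (norm_nonneg _)
        exact le_trans (norm_nonneg _) (hC' 0)
  have hubdd : ∀ m, ‖u m‖ ≤ C + C' * C := by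
    intro m
    calc ‖zz m - s m‖ ≤ ‖zz m‖ + ‖s m‖ := norm_sub_le _ _
    _ ≤ C + C' * C := add_le_add (hzzbdd m) (hsbdd m)
  -- s n = 0
  have hskey := key s hsrec
  have hukey := key u hurec
  have hsn : s n = 0 := by
    have hbd : ∀ k : ℕ, ‖s n‖ ≤ D * Real.exp (-lam * k) * (C' * C) := by
      intro k
      have hle : (n - (k : ℤ)) ≤ n := by omega
      have h1 : s n = 𝒜 n (n - k) (s (n - k)) := hskey (n - k) n
      have h2 := hstab n (n - k) hle (s (n - k)) (hsS (n - k))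
      rw [← h1] at h2
      have h3 : ((n : ℝ) - ((n - (k : ℤ) : ℤ) : ℝ)) = (k : ℝ) := by push_cast; ring
      rw [h3] at h2
      refine le_trans h2 ?_
      have : (0:ℝ) ≤ D * Real.exp (-lam * k) := by positivity
      exact mul_le_mul_of_nonneg_left (hsbdd _) this
    have htend : Tendsto (fun k : ℕ => D * Real.exp (-lam * k) * (C' * C)) atTop (𝓝 0) := by
      have h1 : Tendsto (fun k : ℕ => (-lam * k : ℝ)) atTop atBot := by
        apply Tendsto.const_mul_atTop_of_neg (by linarith)
        exact tendsto_natCast_atTop_atTop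
      have h2 : Tendsto (fun k : ℕ => Real.exp (-lam * k)) atTop (𝓝 0) :=
        Real.tendsto_exp_atBot.comp h1
      have := (h2.const_mul D).mul_const (C' * C)
      simpa using this
    have : ‖s n‖ ≤ 0 :=
      le_of_tendsto_of_tendsto' tendsto_const_nhds htend hbd
    exact norm_le_zero_iff.mp this
  -- u n = 0
  have hun : u n = 0 := by
    have hbd : ∀ k : ℕ, ‖u n‖ ≤ D * Real.exp (-lam * k) * (C + C' * C) := by
      intro k
      have hle : n ≤ n + (k : ℤ) := by omega
      have h1 : u n = 𝒜 n (n + k) (u (n + k)) := hukey (n + k) n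
      have h2 := hunst n (n + k) hle (u (n + k)) (huU (n + k)).1
      rw [← h1] at h2
      have h3 : (((n + (k : ℤ) : ℤ) : ℝ) - (n : ℝ)) = (k : ℝ) := by push_cast; ring
      rw [h3] at h2
      refine le_trans h2 ?_
      have : (0:ℝ) ≤ D * Real.exp (-lam * k) := by positivity
      exact mul_le_mul_of_nonneg_left (hubdd _) this
    have htend : Tendsto (fun k : ℕ => D * Real.exp (-lam * k) * (C + C' * C)) atTop (𝓝 0) := by
      have h1 : Tendsto (fun k : ℕ => (-lam * k : ℝ)) atTop atBot := by
        apply Tendsto.const_mul_atTop_of_neg (by linarith)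
        exact tendsto_natCast_atTop_atTop
      have h2 : Tendsto (fun k : ℕ => Real.exp (-lam * k)) atTop (𝓝 0) :=
        Real.tendsto_exp_atBot.comp h1
      have := (h2.const_mul D).mul_const (C + C' * C)
      simpa using this
    have : ‖u n‖ ≤ 0 :=
      le_of_tendsto_of_tendsto' tendsto_const_nhds htend hbd
    exact norm_le_zero_iff.mp this
  -- conclude
  have hzn : z = zz n := by simp [hzz, hid]
  have : z = 0 := by
    have h1 : zz n = s n + u n := by simp [hu]
    rw [hzn, h1, hsn, hun, add_zero]
  have := sub_eq_zero.mp (hz ▸ this)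
  exact this
end

section
/- (Invariance of the Hölder ball under 𝒯.) With the notation of the generalized Grobman–Hartman construction, suppose ‖𝒜(m,n)‖ ≤ e^{ρ|m−n|}, sup_n ‖f_n‖_∞ ≤ M with M > 1, f_n c-Lipschitz with c ∈ (0,1], and fix α ∈ (0, λ/ρ) and K > 1. Let 𝒴_{α,K} be the set of h ∈ 𝒴 such that ‖h_n(x) − h_n(y)‖ ≤ K‖x−y‖^α for all n, x, y. If 4MDc^α e^{αρ}(1 + e^{−λ+αρ})/(1 − e^{−λ+αρ}) ≤ 1, then 𝒯(𝒴_{α,K}) ⊆ 𝒴_{α,K}. -/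
open Real


/-- interpolation: `min (2M) s ≤ 2M s^α` for `α ∈ (0,1]`, `M ≥ 1`. -/
lemma GH_min_le_rpow {M s α : ℝ} (hM : 1 ≤ M) (hs : 0 ≤ s) (hα : 0 < α) (hα1 : α ≤ 1) :
    min (2 * M) s ≤ 2 * M * s ^ α := by
  rcases le_or_gt 1 s with h1 | h1
  · have h2 : (1:ℝ) ≤ s ^ α := by
      calc (1:ℝ) = 1 ^ α := (Real.one_rpow α).symm
      _ ≤ s ^ α := Real.rpow_le_rpow zero_le_one h1 hα.le
    calc min (2*M) s ≤ 2*M := min_le_left _ _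
    _ ≤ 2*M * s^α := by nlinarith
  · rcases eq_or_lt_of_le hs with h0 | h0
    · rw [← h0, Real.zero_rpow hα.ne', mul_zero]
      exact min_le_right _ _
    · have hsα : s ≤ s ^ α := by
        calc s = s ^ (1:ℝ) := (Real.rpow_one s).symm
        _ ≤ s ^ α := Real.rpow_le_rpow_of_exponent_ge h0 h1.le hα1
      have h3 : 0 ≤ s ^ α := Real.rpow_nonneg hs α
      calc min (2*M) s ≤ s := min_le_right _ _
      _ ≤ s^α := hsα
      _ ≤ 2*M*s^α := by nlinarith

lemma GH_min_split {A B C : ℝ} (hC : 0 ≤ C) : min A (B + C) ≤ min A B + C := by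
  rcases le_total A B with hab | hab
  · calc min A (B+C) ≤ A := min_le_left _ _
    _ ≤ min A B + C := by rw [min_eq_left hab]; linarith
  · calc min A (B+C) ≤ B + C := min_le_right _ _
    _ = min A B + C := by rw [min_eq_right hab]

lemma GH_tsum_diff_bound {X : Type*} [NormedAddCommGroup X] [NormedSpace ℝ X] [CompleteSpace X]
    (g1 g2 : ℕ → X) (B C q0 q : ℝ) (hq00 : 0 ≤ q0) (hq01 : q0 < 1)
    (hq0 : 0 ≤ q) (hq1 : q < 1)
    (h1 : ∀ k, ‖g1 k‖ ≤ B * q0 ^ k) (h2 : ∀ k, ‖g2 k‖ ≤ B * q0 ^ k)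
    (hd : ∀ k, ‖g1 k - g2 k‖ ≤ C * q ^ k) :
    ‖(∑' k, g1 k) - ∑' k, g2 k‖ ≤ C / (1 - q) := by
  have hgeo0 : Summable (fun k : ℕ => B * q0 ^ k) :=
    (summable_geometric_of_lt_one hq00 hq01).mul_left B
  have hgeo : Summable (fun k : ℕ => C * q ^ k) :=
    (summable_geometric_of_lt_one hq0 hq1).mul_left C
  have hs1 : Summable g1 := Summable.of_norm_bounded hgeo0 h1
  have hs2 : Summable g2 := Summable.of_norm_bounded hgeo0 h2
  have hsn : Summable (fun k => ‖g1 k - g2 k‖) :=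
    Summable.of_nonneg_of_le (fun _ => norm_nonneg _) hd hgeo
  rw [← Summable.tsum_sub hs1 hs2]
  calc ‖∑' k, (g1 k - g2 k)‖ ≤ ∑' k, ‖g1 k - g2 k‖ := norm_tsum_le_tsum_norm hsn
  _ ≤ ∑' k : ℕ, C * q ^ k := Summable.tsum_le_tsum hd hsn hgeo
  _ = C * (1 - q)⁻¹ := by rw [tsum_mul_left, tsum_geometric_of_lt_one hq0 hq1]
  _ = C / (1 - q) := (div_eq_mul_inv _ _).symm

lemma GH_cocycle {X : Type*} [NormedAddCommGroup X] [NormedSpace ℝ X]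
    (A : ℤ → X ≃L[ℝ] X) (𝒜 : ℤ → ℤ → X →L[ℝ] X)
    (hid : ∀ n, 𝒜 n n = ContinuousLinearMap.id ℝ X)
    (hco : ∀ m n, 𝒜 (m + 1) n = (A m : X →L[ℝ] X).comp (𝒜 m n)) :
    ∀ p r (v : X), 𝒜 p r (𝒜 r p v) = v := by
  have hstep : ∀ m s (w : X), 𝒜 (m + 1) s w = A m (𝒜 m s w) := by
    intro m s w; rw [hco]; rfl
  have main : ∀ (j q r : ℤ) (v : X), 𝒜 (q + j) q (𝒜 q r v) = 𝒜 (q + j) r v := by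
    intro j
    induction j using Int.induction_on with
    | zero => intro q r v; simp [hid]
    | succ i ih =>
        intro q r v
        have e : q + ((i : ℤ) + 1) = (q + i) + 1 := by ring
        rw [e, hstep, hstep, ih]
    | pred i ih =>
        intro q r v
        apply (A (q + (-(i : ℤ) - 1))).injective
        have e : (q + (-(i : ℤ) - 1)) + 1 = q + (-(i : ℤ)) := by ring
        have h1 : ∀ s (w : X), A (q + (-(i:ℤ)-1)) (𝒜 (q + (-(i:ℤ)-1)) s w) = 𝒜 (q + (-(i:ℤ))) s w := by
          intro s w; rw [← hstep, e]
        show A _ (𝒜 (q + (-(i:ℤ) - 1)) q (𝒜 q r v)) = A _ (𝒜 (q + (-(i:ℤ) - 1)) r v)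
        rw [h1, h1, ih]
  intro p r v
  have := main (p - r) r p v
  rw [show r + (p - r) = p by ring] at this
  rw [this, hid]; rfl




set_option maxHeartbeats 2000000 in
theorem stmt_15
    {X : Type*} [NormedAddCommGroup X] [NormedSpace ℝ X] [CompleteSpace X]
    (A : ℤ → X ≃L[ℝ] X) (𝒜 : ℤ → ℤ → X →L[ℝ] X)
    (hid : ∀ n, 𝒜 n n = ContinuousLinearMap.id ℝ X)
    (hco : ∀ m n, 𝒜 (m + 1) n = (A m : X →L[ℝ] X).comp (𝒜 m n))
    (S U : ℤ → Submodule ℝ X)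
    (hcompl : ∀ n, IsCompl (S n) (U n))
    (hSinv : ∀ n, ∀ x ∈ S n, A n x ∈ S (n + 1))
    (hUinv : ∀ n, ∀ x ∈ U (n + 1), (A n).symm x ∈ U n)
    (P : ℤ → X →L[ℝ] X)
    (hPran : ∀ n x, P n x ∈ S n)
    (hPS : ∀ n, ∀ x ∈ S n, P n x = x)
    (hPU : ∀ n, ∀ x ∈ U n, P n x = 0)
    (D lam ρ : ℝ) (hD : 0 < D) (hlam : 0 < lam) (hρ : 0 < ρ)
    (hb1 : ∀ m n, n ≤ m →
      ‖(𝒜 m n).comp (P n)‖ ≤ D * Real.exp (-lam * ((m : ℝ) - (n : ℝ))))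
    (hb2 : ∀ m n, m ≤ n →
      ‖(𝒜 m n).comp (ContinuousLinearMap.id ℝ X - P n)‖ ≤
        D * Real.exp (-lam * ((n : ℝ) - (m : ℝ))))
    (hgrow : ∀ m n, ‖𝒜 m n‖ ≤ Real.exp (ρ * |(m : ℝ) - (n : ℝ)|))
    (f : ℤ → X → X) (c M : ℝ) (hc0 : 0 < c) (hc1 : c ≤ 1) (hM : 1 < M)
    (hflip : ∀ n x y, ‖f n x - f n y‖ ≤ c * ‖x - y‖)
    (hfbdd : ∀ n x, ‖f n x‖ ≤ M)
    (α K : ℝ) (hα : 0 < α) (hαρ : α * ρ < lam) (hK : 1 < K)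
    (hsmall : 4 * M * D * c ^ α * Real.exp (α * ρ) *
      (1 + Real.exp (-lam + α * ρ)) / (1 - Real.exp (-lam + α * ρ)) ≤ 1)
    (T : (ℤ → X → X) → (ℤ → X → X))
    (hT : ∀ h n x, T h n x =
      (∑' k : ℕ, 𝒜 n (n - (k : ℤ))
        (P (n - (k : ℤ))
          (f (n - (k : ℤ) - 1)
            (𝒜 (n - (k : ℤ) - 1) n x + h (n - (k : ℤ) - 1) (𝒜 (n - (k : ℤ) - 1) n x))))) -
      (∑' k : ℕ,
        𝒜 n (n + 1 + (k : ℤ))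
          (f (n + (k : ℤ)) (𝒜 (n + (k : ℤ)) n x + h (n + (k : ℤ)) (𝒜 (n + (k : ℤ)) n x)) -
            P (n + 1 + (k : ℤ))
              (f (n + (k : ℤ)) (𝒜 (n + (k : ℤ)) n x + h (n + (k : ℤ)) (𝒜 (n + (k : ℤ)) n x)))))) :
    ∀ h : ℤ → X → X, MemY A S U h →
      (∀ (n : ℤ) (x y : X), ‖h n x - h n y‖ ≤ K * ‖x - y‖ ^ α) →
      ∀ (n : ℤ) (x y : X), ‖T h n x - T h n y‖ ≤ K * ‖x - y‖ ^ α := by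
  
  intro h hmem hH n x y
  have hK0 : (0:ℝ) < K := lt_trans one_pos hK
  rcases le_or_gt α 1 with hα1 | hα1
  · -- main case : α ≤ 1
    have hq0 : (0:ℝ) ≤ Real.exp (-lam + α*ρ) := (Real.exp_pos _).le
    have hq1 : Real.exp (-lam + α*ρ) < 1 := by rw [Real.exp_lt_one_iff]; linarith
    have hdα : (0:ℝ) ≤ ‖x - y‖ ^ α := Real.rpow_nonneg (norm_nonneg _) α
    have hcα : (0:ℝ) < c ^ α := Real.rpow_pos_of_pos hc0 α
    have hccα : c ≤ c ^ α := by
      calc c = c ^ (1:ℝ) := (Real.rpow_one c).symm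
      _ ≤ c ^ α := Real.rpow_le_rpow_of_exponent_ge hc0 hc1 hα1
    -- key pointwise estimate
    have key : ∀ (j : ℤ) (L : X →L[ℝ] X) (t : ℝ), ‖L‖ ≤ Real.exp (ρ*t) →
        ‖f j (L x + h j (L x)) - f j (L y + h j (L y))‖ ≤
          (2*M*c^α + c*K) * Real.exp (α*(ρ*t)) * ‖x - y‖^α := by
      intro j L t hL
      have hLxy : ‖L x - L y‖ ≤ Real.exp (ρ*t) * ‖x - y‖ := by
        rw [← map_sub]
        calc ‖L (x-y)‖ ≤ ‖L‖ * ‖x - y‖ := L.le_opNorm _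
        _ ≤ Real.exp (ρ*t) * ‖x-y‖ := mul_le_mul_of_nonneg_right hL (norm_nonneg _)
      have huv : ‖(L x + h j (L x)) - (L y + h j (L y))‖ ≤
          Real.exp (ρ*t) * ‖x-y‖ + K * (Real.exp (ρ*t) * ‖x-y‖)^α := by
        have e1 : (L x + h j (L x)) - (L y + h j (L y))
            = (L x - L y) + (h j (L x) - h j (L y)) := by abel
        rw [e1]
        refine (norm_add_le _ _).trans (add_le_add hLxy ?_)
        refine (hH j (L x) (L y)).trans ?_
        exact mul_le_mul_of_nonneg_left
          (Real.rpow_le_rpow (norm_nonneg _) hLxy hα.le) hK0.le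
      have h2M : ‖f j (L x + h j (L x)) - f j (L y + h j (L y))‖ ≤ 2*M := by
        refine (norm_sub_le _ _).trans ?_
        linarith [hfbdd j (L x + h j (L x)), hfbdd j (L y + h j (L y))]
      have hmin : ‖f j (L x + h j (L x)) - f j (L y + h j (L y))‖ ≤
          min (2*M) (c * ‖(L x + h j (L x)) - (L y + h j (L y))‖) :=
        le_min h2M (hflip j _ _)
      have hbase : (0:ℝ) ≤ Real.exp (ρ*t) * ‖x-y‖ :=
        mul_nonneg (Real.exp_pos _).le (norm_nonneg _)
      have hflat : (Real.exp (ρ*t) * ‖x-y‖)^α = Real.exp (α*(ρ*t)) * ‖x-y‖^α := by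
        rw [Real.mul_rpow (Real.exp_pos _).le (norm_nonneg _), ← Real.exp_mul,
          mul_comm (ρ*t) α]
      calc ‖f j (L x + h j (L x)) - f j (L y + h j (L y))‖
          ≤ min (2*M) (c * ‖(L x + h j (L x)) - (L y + h j (L y))‖) := hmin
        _ ≤ min (2*M) (c * (Real.exp (ρ*t) * ‖x-y‖ + K * (Real.exp (ρ*t) * ‖x-y‖)^α)) :=
            min_le_min le_rfl (mul_le_mul_of_nonneg_left huv hc0.le)
        _ = min (2*M) (c * (Real.exp (ρ*t) * ‖x-y‖) + c * (K * (Real.exp (ρ*t) * ‖x-y‖)^α)) := by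
            rw [mul_add]
        _ ≤ min (2*M) (c * (Real.exp (ρ*t) * ‖x-y‖)) + c * (K * (Real.exp (ρ*t) * ‖x-y‖)^α) :=
            GH_min_split (mul_nonneg hc0.le (mul_nonneg hK0.le (Real.rpow_nonneg hbase _)))
        _ ≤ 2*M * (c * (Real.exp (ρ*t) * ‖x-y‖))^α + c * (K * (Real.exp (ρ*t) * ‖x-y‖)^α) := by
            have := GH_min_le_rpow (M := M) (s := c * (Real.exp (ρ*t) * ‖x-y‖)) hM.le
              (mul_nonneg hc0.le hbase) hα hα1
            linarith
        _ = (2*M*c^α + c*K) * Real.exp (α*(ρ*t)) * ‖x-y‖^α := by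
            rw [Real.mul_rpow hc0.le hbase, hflat]; ring
    -- operator norm bounds
    have hop1 : ∀ k : ℕ, ‖(𝒜 n (n - (k:ℤ))).comp (P (n - (k:ℤ)))‖ ≤ D * Real.exp (-lam * (k:ℝ)) := by
      intro k
      have h0 := hb1 n (n - (k:ℤ)) (by omega)
      have e : ((n:ℝ) - ((n - (k:ℤ) : ℤ):ℝ)) = (k:ℝ) := by push_cast; ring
      rwa [e] at h0
    have hop2 : ∀ k : ℕ, ‖(𝒜 n (n + 1 + (k:ℤ))).comp (ContinuousLinearMap.id ℝ X - P (n + 1 + (k:ℤ)))‖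
        ≤ D * Real.exp (-lam * ((k:ℝ)+1)) := by
      intro k
      have h0 := hb2 n (n + 1 + (k:ℤ)) (by omega)
      have e : (((n + 1 + (k:ℤ) : ℤ):ℝ) - (n:ℝ)) = (k:ℝ) + 1 := by push_cast; ring
      rwa [e] at h0
    have hgrow1 : ∀ k : ℕ, ‖𝒜 (n - (k:ℤ) - 1) n‖ ≤ Real.exp (ρ * ((k:ℝ)+1)) := by
      intro k
      have h0 := hgrow (n - (k:ℤ) - 1) n
      have e : |((n - (k:ℤ) - 1 : ℤ):ℝ) - (n:ℝ)| = (k:ℝ) + 1 := by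
        push_cast
        rw [show (n:ℝ) - (k:ℝ) - 1 - (n:ℝ) = -((k:ℝ)+1) by ring, abs_neg,
          abs_of_nonneg (by positivity)]
      rwa [e] at h0
    have hgrow2 : ∀ k : ℕ, ‖𝒜 (n + (k:ℤ)) n‖ ≤ Real.exp (ρ * (k:ℝ)) := by
      intro k
      have h0 := hgrow (n + (k:ℤ)) n
      have e : |((n + (k:ℤ) : ℤ):ℝ) - (n:ℝ)| = (k:ℝ) := by
        push_cast
        rw [show (n:ℝ) + (k:ℝ) - (n:ℝ) = (k:ℝ) by ring, abs_of_nonneg (by positivity)]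
      rwa [e] at h0
    -- uniform norm bounds for summability
    have habs1 : ∀ (k : ℕ) (v : X), ‖v‖ ≤ M →
        ‖𝒜 n (n - (k:ℤ)) (P (n - (k:ℤ)) v)‖ ≤ D * M * Real.exp (-lam) ^ k := by
      intro k v hv
      calc ‖𝒜 n (n - (k:ℤ)) (P (n - (k:ℤ)) v)‖
          = ‖((𝒜 n (n - (k:ℤ))).comp (P (n - (k:ℤ)))) v‖ := rfl
        _ ≤ ‖(𝒜 n (n - (k:ℤ))).comp (P (n - (k:ℤ)))‖ * ‖v‖ := ContinuousLinearMap.le_opNorm _ _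
        _ ≤ (D * Real.exp (-lam * (k:ℝ))) * M :=
            mul_le_mul (hop1 k) hv (norm_nonneg _) (by positivity)
        _ = D * M * Real.exp (-lam) ^ k := by
            rw [← Real.exp_nat_mul, mul_comm ((k:ℕ):ℝ) (-lam)]; ring
    have hrw2 : ∀ (k : ℕ) (v : X), 𝒜 n (n + 1 + (k:ℤ)) (v - P (n + 1 + (k:ℤ)) v)
        = ((𝒜 n (n + 1 + (k:ℤ))).comp (ContinuousLinearMap.id ℝ X - P (n + 1 + (k:ℤ)))) v := by
      intro k v; simp
    have habs2 : ∀ (k : ℕ) (v : X), ‖v‖ ≤ M →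
        ‖𝒜 n (n + 1 + (k:ℤ)) (v - P (n + 1 + (k:ℤ)) v)‖ ≤ D * M * Real.exp (-lam) ^ k := by
      intro k v hv
      have e1 : Real.exp (-lam*((k:ℝ)+1)) = Real.exp (-lam) ^ k * Real.exp (-lam) := by
        rw [← Real.exp_nat_mul, ← Real.exp_add]; congr 1; ring
      have e2 : Real.exp (-lam) ≤ 1 := by rw [Real.exp_le_one_iff]; linarith
      calc ‖𝒜 n (n + 1 + (k:ℤ)) (v - P (n + 1 + (k:ℤ)) v)‖
          = ‖((𝒜 n (n + 1 + (k:ℤ))).comp (ContinuousLinearMap.id ℝ X - P (n + 1 + (k:ℤ)))) v‖ := by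
            rw [hrw2]
        _ ≤ ‖(𝒜 n (n + 1 + (k:ℤ))).comp (ContinuousLinearMap.id ℝ X - P (n + 1 + (k:ℤ)))‖ * ‖v‖ :=
            ContinuousLinearMap.le_opNorm _ _
        _ ≤ (D * Real.exp (-lam * ((k:ℝ)+1))) * M :=
            mul_le_mul (hop2 k) hv (norm_nonneg _) (by positivity)
        _ ≤ D * M * Real.exp (-lam) ^ k := by
            rw [e1]
            nlinarith [mul_nonneg (mul_nonneg hD.le (le_of_lt (lt_trans one_pos hM)))
              (pow_nonneg (Real.exp_pos (-lam)).le k), pow_nonneg (Real.exp_pos (-lam)).le k]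
    rw [hT h n x, hT h n y, sub_sub_sub_comm]
    refine le_trans (norm_sub_le _ _) ?_
    have est1 : ‖(∑' k : ℕ, 𝒜 n (n - (k:ℤ))
          (P (n - (k:ℤ)) (f (n - (k:ℤ) - 1)
            (𝒜 (n - (k:ℤ) - 1) n x + h (n - (k:ℤ) - 1) (𝒜 (n - (k:ℤ) - 1) n x))))) -
        (∑' k : ℕ, 𝒜 n (n - (k:ℤ))
          (P (n - (k:ℤ)) (f (n - (k:ℤ) - 1)
            (𝒜 (n - (k:ℤ) - 1) n y + h (n - (k:ℤ) - 1) (𝒜 (n - (k:ℤ) - 1) n y)))))‖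
        ≤ (D * ((2*M*c^α + c*K) * Real.exp (α*ρ)) * ‖x-y‖^α) / (1 - Real.exp (-lam + α*ρ)) := by
      apply GH_tsum_diff_bound _ _ (D*M) _ (Real.exp (-lam)) (Real.exp (-lam + α*ρ))
        (Real.exp_pos _).le (by rw [Real.exp_lt_one_iff]; linarith) hq0 hq1
      · exact fun k => habs1 k _ (hfbdd _ _)
      · exact fun k => habs1 k _ (hfbdd _ _)
      · intro k
        have hqpow : Real.exp (-lam + α*ρ) ^ k = Real.exp ((k:ℝ) * (-lam + α*ρ)) :=
          (Real.exp_nat_mul _ k).symm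
        have hexp : Real.exp (-lam * (k:ℝ)) * Real.exp (α*(ρ*((k:ℝ)+1)))
            = Real.exp (α*ρ) * Real.exp (-lam + α*ρ) ^ k := by
          rw [hqpow, ← Real.exp_add, ← Real.exp_add]; congr 1; ring
        have hkey := key (n - (k:ℤ) - 1) (𝒜 (n - (k:ℤ) - 1) n) ((k:ℝ)+1) (hgrow1 k)
        calc ‖𝒜 n (n - (k:ℤ)) (P (n - (k:ℤ)) (f (n - (k:ℤ) - 1)
                (𝒜 (n - (k:ℤ) - 1) n x + h (n - (k:ℤ) - 1) (𝒜 (n - (k:ℤ) - 1) n x)))) -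
              𝒜 n (n - (k:ℤ)) (P (n - (k:ℤ)) (f (n - (k:ℤ) - 1)
                (𝒜 (n - (k:ℤ) - 1) n y + h (n - (k:ℤ) - 1) (𝒜 (n - (k:ℤ) - 1) n y))))‖
            = ‖((𝒜 n (n - (k:ℤ))).comp (P (n - (k:ℤ))))
                ((f (n - (k:ℤ) - 1)
                  (𝒜 (n - (k:ℤ) - 1) n x + h (n - (k:ℤ) - 1) (𝒜 (n - (k:ℤ) - 1) n x))) -
                 (f (n - (k:ℤ) - 1)
                  (𝒜 (n - (k:ℤ) - 1) n y + h (n - (k:ℤ) - 1) (𝒜 (n - (k:ℤ) - 1) n y))))‖ := by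
              rw [map_sub]; rfl
          _ ≤ ‖(𝒜 n (n - (k:ℤ))).comp (P (n - (k:ℤ)))‖ *
                ‖(f (n - (k:ℤ) - 1)
                  (𝒜 (n - (k:ℤ) - 1) n x + h (n - (k:ℤ) - 1) (𝒜 (n - (k:ℤ) - 1) n x))) -
                 (f (n - (k:ℤ) - 1)
                  (𝒜 (n - (k:ℤ) - 1) n y + h (n - (k:ℤ) - 1) (𝒜 (n - (k:ℤ) - 1) n y)))‖ :=
              ContinuousLinearMap.le_opNorm _ _
          _ ≤ (D * Real.exp (-lam * (k:ℝ))) *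
                ((2*M*c^α + c*K) * Real.exp (α*(ρ*((k:ℝ)+1))) * ‖x - y‖^α) :=
              mul_le_mul (hop1 k) hkey (norm_nonneg _) (by positivity)
          _ = (D * ((2*M*c^α + c*K) * Real.exp (α*ρ)) * ‖x-y‖^α) * Real.exp (-lam + α*ρ) ^ k := by
              linear_combination (D * (2*M*c^α + c*K) * (‖x-y‖^α)) * hexp
    have est2 : ‖(∑' k : ℕ, 𝒜 n (n + 1 + (k:ℤ))
          (f (n + (k:ℤ)) (𝒜 (n + (k:ℤ)) n x + h (n + (k:ℤ)) (𝒜 (n + (k:ℤ)) n x)) -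
            P (n + 1 + (k:ℤ))
              (f (n + (k:ℤ)) (𝒜 (n + (k:ℤ)) n x + h (n + (k:ℤ)) (𝒜 (n + (k:ℤ)) n x))))) -
        (∑' k : ℕ, 𝒜 n (n + 1 + (k:ℤ))
          (f (n + (k:ℤ)) (𝒜 (n + (k:ℤ)) n y + h (n + (k:ℤ)) (𝒜 (n + (k:ℤ)) n y)) -
            P (n + 1 + (k:ℤ))
              (f (n + (k:ℤ)) (𝒜 (n + (k:ℤ)) n y + h (n + (k:ℤ)) (𝒜 (n + (k:ℤ)) n y)))))‖
        ≤ (D * ((2*M*c^α + c*K) * Real.exp (-lam)) * ‖x-y‖^α) / (1 - Real.exp (-lam + α*ρ)) := by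
      apply GH_tsum_diff_bound _ _ (D*M) _ (Real.exp (-lam)) (Real.exp (-lam + α*ρ))
        (Real.exp_pos _).le (by rw [Real.exp_lt_one_iff]; linarith) hq0 hq1
      · exact fun k => habs2 k _ (hfbdd _ _)
      · exact fun k => habs2 k _ (hfbdd _ _)
      · intro k
        have hqpow : Real.exp (-lam + α*ρ) ^ k = Real.exp ((k:ℝ) * (-lam + α*ρ)) :=
          (Real.exp_nat_mul _ k).symm
        have hexp : Real.exp (-lam * ((k:ℝ)+1)) * Real.exp (α*(ρ*(k:ℝ)))
            = Real.exp (-lam) * Real.exp (-lam + α*ρ) ^ k := by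
          rw [hqpow, ← Real.exp_add, ← Real.exp_add]; congr 1; ring
        have hkey := key (n + (k:ℤ)) (𝒜 (n + (k:ℤ)) n) ((k:ℝ)) (hgrow2 k)
        calc ‖𝒜 n (n + 1 + (k:ℤ))
              (f (n + (k:ℤ)) (𝒜 (n + (k:ℤ)) n x + h (n + (k:ℤ)) (𝒜 (n + (k:ℤ)) n x)) -
                P (n + 1 + (k:ℤ))
                  (f (n + (k:ℤ)) (𝒜 (n + (k:ℤ)) n x + h (n + (k:ℤ)) (𝒜 (n + (k:ℤ)) n x)))) -
              𝒜 n (n + 1 + (k:ℤ))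
              (f (n + (k:ℤ)) (𝒜 (n + (k:ℤ)) n y + h (n + (k:ℤ)) (𝒜 (n + (k:ℤ)) n y)) -
                P (n + 1 + (k:ℤ))
                  (f (n + (k:ℤ)) (𝒜 (n + (k:ℤ)) n y + h (n + (k:ℤ)) (𝒜 (n + (k:ℤ)) n y))))‖
            = ‖((𝒜 n (n + 1 + (k:ℤ))).comp (ContinuousLinearMap.id ℝ X - P (n + 1 + (k:ℤ))))
                ((f (n + (k:ℤ)) (𝒜 (n + (k:ℤ)) n x + h (n + (k:ℤ)) (𝒜 (n + (k:ℤ)) n x))) -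
                 (f (n + (k:ℤ)) (𝒜 (n + (k:ℤ)) n y + h (n + (k:ℤ)) (𝒜 (n + (k:ℤ)) n y))))‖ := by
              rw [hrw2, hrw2, map_sub]
          _ ≤ ‖(𝒜 n (n + 1 + (k:ℤ))).comp (ContinuousLinearMap.id ℝ X - P (n + 1 + (k:ℤ)))‖ *
                ‖(f (n + (k:ℤ)) (𝒜 (n + (k:ℤ)) n x + h (n + (k:ℤ)) (𝒜 (n + (k:ℤ)) n x))) -
                 (f (n + (k:ℤ)) (𝒜 (n + (k:ℤ)) n y + h (n + (k:ℤ)) (𝒜 (n + (k:ℤ)) n y)))‖ :=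
              ContinuousLinearMap.le_opNorm _ _
          _ ≤ (D * Real.exp (-lam * ((k:ℝ)+1))) *
                ((2*M*c^α + c*K) * Real.exp (α*(ρ*(k:ℝ))) * ‖x - y‖^α) :=
              mul_le_mul (hop2 k) hkey (norm_nonneg _) (by positivity)
          _ = (D * ((2*M*c^α + c*K) * Real.exp (-lam)) * ‖x-y‖^α) * Real.exp (-lam + α*ρ) ^ k := by
              linear_combination (D * (2*M*c^α + c*K) * (‖x-y‖^α)) * hexp
    refine le_trans (add_le_add est1 est2) ?_
    -- final numerical inequality
    rw [← add_div, div_le_iff₀ (by linarith : (0:ℝ) < 1 - Real.exp (-lam + α*ρ))]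
    have hsm : 4*M*D*c^α*Real.exp (α*ρ)*(1 + Real.exp (-lam + α*ρ))
        ≤ 1 - Real.exp (-lam + α*ρ) := by
      rw [div_le_one (by linarith)] at hsmall; exact hsmall
    have hee : Real.exp (-lam) ≤ Real.exp (α*ρ) * Real.exp (-lam + α*ρ) := by
      rw [← Real.exp_add]
      apply Real.exp_le_exp.mpr
      nlinarith
    have hG : 2*M*c^α + c*K ≤ c^α*(2*M+K) := by nlinarith
    have hsum : Real.exp (α*ρ) + Real.exp (-lam)
        ≤ Real.exp (α*ρ)*(1 + Real.exp (-lam + α*ρ)) := by nlinarith [Real.exp_pos (α*ρ)]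
    have hscalar : D * ((2*M*c^α + c*K) * Real.exp (α*ρ)) + D * ((2*M*c^α + c*K) * Real.exp (-lam))
        ≤ K * (1 - Real.exp (-lam + α*ρ)) := by
      have hGpos : (0:ℝ) ≤ 2*M*c^α + c*K := by nlinarith [mul_pos hc0 hK0]
      have h2 : D * (2*M*c^α + c*K) * (Real.exp (α*ρ) + Real.exp (-lam))
          ≤ D * (c^α*(2*M+K)) * (Real.exp (α*ρ)*(1 + Real.exp (-lam + α*ρ))) := by
        apply mul_le_mul (mul_le_mul_of_nonneg_left hG hD.le) hsum (by positivity)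
          (mul_nonneg hD.le (mul_nonneg hcα.le (by linarith)))
      have h4 : (D*c^α*Real.exp (α*ρ)*(1 + Real.exp (-lam + α*ρ))) * (2*M+K)
          ≤ K*(1 - Real.exp (-lam + α*ρ)) := by
        have ht : (0:ℝ) ≤ D*c^α*Real.exp (α*ρ)*(1 + Real.exp (-lam + α*ρ)) :=
          mul_nonneg (mul_nonneg (mul_nonneg hD.le hcα.le) (Real.exp_pos _).le) (by linarith)
        have hMK : (0:ℝ) ≤ 4*M*K - 2*M - K := by
          nlinarith [mul_pos (by linarith : (0:ℝ) < M - 1) (by linarith : (0:ℝ) < K - 1)]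
        linarith [mul_le_mul_of_nonneg_left hsm (by linarith : (0:ℝ) ≤ K),
          mul_nonneg ht hMK]
      linarith [h2, h4]
    calc D * ((2*M*c^α + c*K) * Real.exp (α*ρ)) * ‖x-y‖^α
          + D * ((2*M*c^α + c*K) * Real.exp (-lam)) * ‖x-y‖^α
        = (D * ((2*M*c^α + c*K) * Real.exp (α*ρ))
            + D * ((2*M*c^α + c*K) * Real.exp (-lam))) * ‖x-y‖^α := by ring
      _ ≤ (K * (1 - Real.exp (-lam + α*ρ))) * ‖x-y‖^α :=
          mul_le_mul_of_nonneg_right hscalar hdα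
      _ = K * ‖x-y‖^α * (1 - Real.exp (-lam + α*ρ)) := by ring
  · -- degenerate case : α > 1 forces X = 0
    have hcoc := GH_cocycle A 𝒜 hid hco
    have hrl : ρ < lam := by nlinarith
    have hvanish : ∀ w : X, (∀ k : ℕ, ‖w‖ ≤ (D * ‖w‖) * Real.exp (ρ - lam) ^ k) → w = 0 := by
      intro w hw
      have hr0 : (0:ℝ) ≤ Real.exp (ρ - lam) := (Real.exp_pos _).le
      have hr1 : Real.exp (ρ - lam) < 1 := by rw [Real.exp_lt_one_iff]; linarith
      have hlim : Filter.Tendsto (fun k : ℕ => (D * ‖w‖) * Real.exp (ρ - lam) ^ k)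
          Filter.atTop (nhds 0) := by
        have := (tendsto_pow_atTop_nhds_zero_of_lt_one hr0 hr1).const_mul (D * ‖w‖)
        simpa using this
      exact norm_le_zero_iff.mp (ge_of_tendsto' hlim hw)
    have hzero : ∀ z : X, z = 0 := by
      intro z
      have hz : z ∈ S 0 ⊔ U 0 := by rw [(hcompl 0).sup_eq_top]; exact Submodule.mem_top
      obtain ⟨s, hs, u, hu, rfl⟩ := Submodule.mem_sup.mp hz
      have hs0 : s = 0 := by
        apply hvanish
        intro k
        have h0 := hb1 (k:ℤ) 0 (Int.natCast_nonneg k)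
        have e : (((k:ℤ):ℝ) - ((0:ℤ):ℝ)) = (k:ℝ) := by push_cast; ring
        rw [e] at h0
        have hA1 : ‖𝒜 (k:ℤ) 0 s‖ ≤ (D * Real.exp (-lam * (k:ℝ))) * ‖s‖ := by
          calc ‖𝒜 (k:ℤ) 0 s‖ = ‖((𝒜 (k:ℤ) 0).comp (P 0)) s‖ := by
                rw [ContinuousLinearMap.comp_apply, hPS 0 s hs]
            _ ≤ ‖(𝒜 (k:ℤ) 0).comp (P 0)‖ * ‖s‖ := ContinuousLinearMap.le_opNorm _ _
            _ ≤ (D * Real.exp (-lam * (k:ℝ))) * ‖s‖ :=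
                mul_le_mul_of_nonneg_right h0 (norm_nonneg _)
        have hg : ‖𝒜 (0:ℤ) (k:ℤ)‖ ≤ Real.exp (ρ * (k:ℝ)) := by
          have h1 := hgrow (0:ℤ) (k:ℤ)
          have e2 : |((0:ℤ):ℝ) - ((k:ℤ):ℝ)| = (k:ℝ) := by
            push_cast; rw [zero_sub, abs_neg, abs_of_nonneg (Nat.cast_nonneg k)]
          rwa [e2] at h1
        have hexp : Real.exp (ρ*(k:ℝ)) * Real.exp (-lam*(k:ℝ)) = Real.exp (ρ - lam) ^ k := by
          rw [← Real.exp_add, ← Real.exp_nat_mul]; congr 1; ring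
        calc ‖s‖ = ‖𝒜 (0:ℤ) (k:ℤ) (𝒜 (k:ℤ) 0 s)‖ := by rw [hcoc]
          _ ≤ ‖𝒜 (0:ℤ) (k:ℤ)‖ * ‖𝒜 (k:ℤ) 0 s‖ := ContinuousLinearMap.le_opNorm _ _
          _ ≤ Real.exp (ρ*(k:ℝ)) * ((D * Real.exp (-lam*(k:ℝ))) * ‖s‖) :=
              mul_le_mul hg hA1 (norm_nonneg _) (Real.exp_pos _).le
          _ = (D * ‖s‖) * Real.exp (ρ - lam) ^ k := by
              linear_combination (D * ‖s‖) * hexp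
      have hu0 : u = 0 := by
        apply hvanish
        intro k
        have h0 := hb2 (-(k:ℤ)) 0 (by omega)
        have e : (((0:ℤ):ℝ) - ((-(k:ℤ) : ℤ):ℝ)) = (k:ℝ) := by push_cast; ring
        rw [e] at h0
        have hA1 : ‖𝒜 (-(k:ℤ)) 0 u‖ ≤ (D * Real.exp (-lam * (k:ℝ))) * ‖u‖ := by
          calc ‖𝒜 (-(k:ℤ)) 0 u‖
              = ‖((𝒜 (-(k:ℤ)) 0).comp (ContinuousLinearMap.id ℝ X - P 0)) u‖ := by
                rw [ContinuousLinearMap.comp_apply, ContinuousLinearMap.sub_apply,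
                  ContinuousLinearMap.id_apply, hPU 0 u hu, sub_zero]
            _ ≤ ‖(𝒜 (-(k:ℤ)) 0).comp (ContinuousLinearMap.id ℝ X - P 0)‖ * ‖u‖ :=
                ContinuousLinearMap.le_opNorm _ _
            _ ≤ (D * Real.exp (-lam * (k:ℝ))) * ‖u‖ :=
                mul_le_mul_of_nonneg_right h0 (norm_nonneg _)
        have hg : ‖𝒜 (0:ℤ) (-(k:ℤ))‖ ≤ Real.exp (ρ * (k:ℝ)) := by
          have h1 := hgrow (0:ℤ) (-(k:ℤ))
          have e2 : |((0:ℤ):ℝ) - ((-(k:ℤ) : ℤ):ℝ)| = (k:ℝ) := by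
            push_cast; rw [zero_sub, neg_neg, abs_of_nonneg (Nat.cast_nonneg k)]
          rwa [e2] at h1
        have hexp : Real.exp (ρ*(k:ℝ)) * Real.exp (-lam*(k:ℝ)) = Real.exp (ρ - lam) ^ k := by
          rw [← Real.exp_add, ← Real.exp_nat_mul]; congr 1; ring
        calc ‖u‖ = ‖𝒜 (0:ℤ) (-(k:ℤ)) (𝒜 (-(k:ℤ)) 0 u)‖ := by rw [hcoc]
          _ ≤ ‖𝒜 (0:ℤ) (-(k:ℤ))‖ * ‖𝒜 (-(k:ℤ)) 0 u‖ := ContinuousLinearMap.le_opNorm _ _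
          _ ≤ Real.exp (ρ*(k:ℝ)) * ((D * Real.exp (-lam*(k:ℝ))) * ‖u‖) :=
              mul_le_mul hg hA1 (norm_nonneg _) (Real.exp_pos _).le
          _ = (D * ‖u‖) * Real.exp (ρ - lam) ^ k := by
              linear_combination (D * ‖u‖) * hexp
      rw [hs0, hu0, add_zero]
    have h0 : T h n x - T h n y = 0 := hzero _
    rw [h0, norm_zero]
    exact mul_nonneg (by linarith) (Real.rpow_nonneg (norm_nonneg _) _)
end

section
/- Let S_ω be the bilateral weighted left shift on X = ℓ^p(ℤ) (1 ≤ p < ∞) or c₀(ℤ) with bounded weights ω = (ω_n) satisfying inf_n |ω_n| > 0. Suppose limsup_{n→∞} sup_{k∈ℕ} |ω_{-k}ω_{-k-1}⋯ω_{-k-n}|^{1/n} < 1 and liminf_{n→∞} inf_{k∈ℕ} |ω_k ω_{k+1}⋯ω_{k+n}|^{1/n} > 1. Then S_ω is a generalized hyperbolic operator with respect to the splitting X = E^s ⊕ E^u, where E^s = {x : x_n = 0 for n > 0} and E^u = {x : x_n = 0 for n ≤ 0}: i.e., S_ω(E^s) ⊆ E^s, S_ω^{-1}(E^u) ⊆ E^u,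 and the restrictions S_ω|_{E^s} and S_ω^{-1}|_{E^u} are uniform exponential contractions. -/
open scoped ENNReal

private lemma ptoReal_pos {p : ℝ≥0∞} [Fact (1 ≤ p)] (hp : p ≠ ⊤) : 0 < p.toReal :=
  ENNReal.toReal_pos (one_pos.trans_le (Fact.out : 1 ≤ p)).ne' hp

private lemma lp_mem_aux {p : ℝ≥0∞} [Fact (1 ≤ p)] (hp : p ≠ ⊤)
    (f : lp (fun _ : ℤ => ℝ) p) (g : ℤ → ℝ) (C : ℝ) (hC : 0 ≤ C) (e : ℤ ≃ ℤ)
    (h : ∀ n, |g n| ≤ C * |f (e n)|) : Memℓp g p := by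
  have hq := ptoReal_pos hp
  apply memℓp_gen
  have hs : Summable fun n => C ^ p.toReal * ‖(f : ℤ → ℝ) (e n)‖ ^ p.toReal := by
    exact (((lp.memℓp f).summable hq).comp_injective e.injective).mul_left _
  refine hs.of_nonneg_of_le (fun n => ?_) (fun n => ?_)
  · positivity
  · rw [Real.norm_eq_abs, Real.norm_eq_abs, ← Real.mul_rpow hC (abs_nonneg _)]
    exact Real.rpow_le_rpow (abs_nonneg _) (h n) hq.le

private lemma lp_norm_aux {p : ℝ≥0∞} [Fact (1 ≤ p)] (hp : p ≠ ⊤)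
    (f g : lp (fun _ : ℤ => ℝ) p) (C : ℝ) (hC : 0 ≤ C) (e : ℤ ≃ ℤ)
    (h : ∀ n, |g n| ≤ C * |f (e n)|) : ‖g‖ ≤ C * ‖f‖ := by
  have hq := ptoReal_pos hp
  refine lp.norm_le_of_tsum_le hq (by positivity) ?_
  have hs : Summable fun n => C ^ p.toReal * ‖(f : ℤ → ℝ) (e n)‖ ^ p.toReal :=
    (((lp.memℓp f).summable hq).comp_injective e.injective).mul_left _
  calc ∑' n, ‖(g : ℤ → ℝ) n‖ ^ p.toReal
      ≤ ∑' n, C ^ p.toReal * ‖(f : ℤ → ℝ) (e n)‖ ^ p.toReal := by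
        refine Summable.tsum_le_tsum (fun n => ?_) ((lp.memℓp g).summable hq) hs
        rw [Real.norm_eq_abs, Real.norm_eq_abs, ← Real.mul_rpow hC (abs_nonneg _)]
        exact Real.rpow_le_rpow (abs_nonneg _) (h n) hq.le
    _ = C ^ p.toReal * ∑' n, ‖(f : ℤ → ℝ) (e n)‖ ^ p.toReal := tsum_mul_left
    _ = C ^ p.toReal * ∑' n, ‖(f : ℤ → ℝ) n‖ ^ p.toReal := by
        rw [e.tsum_eq (fun n => ‖(f : ℤ → ℝ) n‖ ^ p.toReal)]
    _ = C ^ p.toReal * ‖f‖ ^ p.toReal := by rw [lp.norm_rpow_eq_tsum hq]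
    _ = (C * ‖f‖) ^ p.toReal := (Real.mul_rpow hC (norm_nonneg _)).symm

private lemma rpow_key_le {a r : ℝ} (ha : 0 ≤ a) {n : ℕ} (hn : n ≠ 0)
    (h : a ^ ((1 : ℝ) / n) ≤ r) : a ≤ r ^ n := by
  calc a = (a ^ ((1 : ℝ) / n)) ^ n := by
        rw [← Real.rpow_natCast (a ^ ((1 : ℝ) / n)) n, ← Real.rpow_mul ha, one_div,
          inv_mul_cancel₀ (by exact_mod_cast hn : (n : ℝ) ≠ 0), Real.rpow_one]
    _ ≤ r ^ n := pow_le_pow_left₀ (Real.rpow_nonneg ha _) h n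

private lemma rpow_key_ge {a R : ℝ} (ha : 0 ≤ a) (hR : 0 ≤ R) {n : ℕ} (hn : n ≠ 0)
    (h : R ≤ a ^ ((1 : ℝ) / n)) : R ^ n ≤ a := by
  calc R ^ n ≤ (a ^ ((1 : ℝ) / n)) ^ n := pow_le_pow_left₀ hR h n
    _ = a := by
        rw [← Real.rpow_natCast (a ^ ((1 : ℝ) / n)) n, ← Real.rpow_mul ha, one_div,
          inv_mul_cancel₀ (by exact_mod_cast hn : (n : ℝ) ≠ 0), Real.rpow_one]

set_option maxHeartbeats 1000000 in
theorem stmt_17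
    (p : ℝ≥0∞) [Fact (1 ≤ p)] (hp : p ≠ ⊤)
    (ω : ℤ → ℝ)
    (hωbd : ∃ W, ∀ n, |ω n| ≤ W)
    (hωinf : ∃ w > 0, ∀ n : ℤ, w ≤ |ω n|)
    (Sw : lp (fun _ : ℤ => ℝ) p ≃L[ℝ] lp (fun _ : ℤ => ℝ) p)
    (hSw : ∀ (x : lp (fun _ : ℤ => ℝ) p) (n : ℤ), (Sw x : ℤ → ℝ) n = ω (n + 1) * x (n + 1))
    -- limsup_{n→∞} sup_k |ω_{-k}⋯ω_{-k-n}|^{1/n} < 1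
    (hlimsup : ∃ r < (1 : ℝ), ∃ N : ℕ, ∀ n ≥ N, ∀ k : ℕ,
      |∏ i ∈ Finset.range (n + 1), ω (-(k : ℤ) - (i : ℤ))| ^ (1 / (n : ℝ)) ≤ r)
    -- liminf_{n→∞} inf_k |ω_k⋯ω_{k+n}|^{1/n} > 1
    (hliminf : ∃ R > (1 : ℝ), ∃ N : ℕ, ∀ n ≥ N, ∀ k : ℕ,
      R ≤ |∏ i ∈ Finset.range (n + 1), ω ((k : ℤ) + (i : ℤ))| ^ (1 / (n : ℝ))) :
    -- E^s and E^u are closed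
    (IsClosed {x : lp (fun _ : ℤ => ℝ) p | ∀ n : ℤ, 0 < n → x n = 0} ∧
     IsClosed {x : lp (fun _ : ℤ => ℝ) p | ∀ n : ℤ, n ≤ 0 → x n = 0}) ∧
    -- X = E^s ⊕ E^u
    (∀ x : lp (fun _ : ℤ => ℝ) p, ∃! y : (lp (fun _ : ℤ => ℝ) p) × (lp (fun _ : ℤ => ℝ) p),
      (∀ n : ℤ, 0 < n → y.1 n = 0) ∧ (∀ n : ℤ, n ≤ 0 → y.2 n = 0) ∧ x = y.1 + y.2) ∧
    -- invariance: S_ω(E^s) ⊆ E^s and S_ω^{-1}(E^u) ⊆ E^u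
    (∀ x : lp (fun _ : ℤ => ℝ) p, (∀ n : ℤ, 0 < n → x n = 0) →
      ∀ n : ℤ, 0 < n → (Sw x) n = 0) ∧
    (∀ x : lp (fun _ : ℤ => ℝ) p, (∀ n : ℤ, n ≤ 0 → x n = 0) →
      ∀ n : ℤ, n ≤ 0 → (Sw.symm x) n = 0) ∧
    -- uniform exponential contraction on E^s and expansion on E^u
    (∃ D ≥ (1 : ℝ), ∃ lam > (0 : ℝ),
      (∀ x : lp (fun _ : ℤ => ℝ) p, (∀ n : ℤ, 0 < n → x n = 0) →
        ∀ m : ℕ, ‖(⇑Sw)^[m] x‖ ≤ D * Real.exp (-lam * m) * ‖x‖) ∧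
      (∀ x : lp (fun _ : ℤ => ℝ) p, (∀ n : ℤ, n ≤ 0 → x n = 0) →
        ∀ m : ℕ, ‖(⇑Sw.symm)^[m] x‖ ≤ D * Real.exp (-lam * m) * ‖x‖)) := by
  obtain ⟨w, hw0, hw⟩ := hωinf
  have hω0 : ∀ n, ω n ≠ 0 := by
    intro n hn
    have := hw n
    rw [hn, abs_zero] at this
    linarith
  have hp0 : p ≠ 0 := (one_pos.trans_le (Fact.out : 1 ≤ p)).ne'
  -- continuity of evaluations
  have hev : ∀ n : ℤ, Continuous fun x : lp (fun _ : ℤ => ℝ) p => (x : ℤ → ℝ) n := by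
    intro n
    apply (LipschitzWith.of_dist_le_mul (K := 1) ?_).continuous
    intro x y
    simp only [NNReal.coe_one, one_mul, dist_eq_norm]
    have := lp.norm_apply_le_norm hp0 (x - y) n
    simpa using this
  have hclosed : ∀ s : Set ℤ, IsClosed {x : lp (fun _ : ℤ => ℝ) p | ∀ n ∈ s, (x : ℤ → ℝ) n = 0} := by
    intro s
    have : {x : lp (fun _ : ℤ => ℝ) p | ∀ n ∈ s, (x : ℤ → ℝ) n = 0}
        = ⋂ n ∈ s, {x : lp (fun _ : ℤ => ℝ) p | (x : ℤ → ℝ) n = 0} := by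
      ext x; simp [Set.mem_iInter]
    rw [this]
    exact isClosed_biInter fun n _ => isClosed_eq (hev n) continuous_const
  -- coordinate formula for Sw.symm
  have hSw' : ∀ (x : lp (fun _ : ℤ => ℝ) p) (n : ℤ),
      (Sw.symm x : ℤ → ℝ) n = x (n - 1) / ω n := by
    intro x n
    have h := hSw (Sw.symm x) (n - 1)
    rw [Sw.apply_symm_apply] at h
    rw [sub_add_cancel] at h
    rw [h]
    exact (mul_div_cancel_left₀ _ (hω0 n)).symm
  -- iterate formulas
  have hiter : ∀ (x : lp (fun _ : ℤ => ℝ) p) (m : ℕ) (n : ℤ),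
      (((⇑Sw)^[m] x : lp (fun _ : ℤ => ℝ) p) : ℤ → ℝ) n
        = (∏ i ∈ Finset.range m, ω (n + 1 + (i : ℤ))) * x (n + m) := by
    intro x m
    induction m with
    | zero => intro n; simp
    | succ m ih =>
      intro n
      rw [Function.iterate_succ_apply', hSw, ih (n + 1), Finset.prod_range_succ']
      have h1 : ∀ i : ℕ, (n + 1 + ((i : ℤ) + 1)) = n + 1 + 1 + (i : ℤ) := by intro i; ring
      have h2 : ∏ i ∈ Finset.range m, ω (n + 1 + ((i + 1 : ℕ) : ℤ))
          = ∏ i ∈ Finset.range m, ω (n + 1 + 1 + (i : ℤ)) := by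
        refine Finset.prod_congr rfl fun i _ => ?_
        congr 1
        push_cast
        ring
      rw [h2]
      have h3 : n + 1 + ((m : ℕ) : ℤ) = n + ((m + 1 : ℕ) : ℤ) := by push_cast; ring
      rw [h3]
      push_cast
      ring
  have hiter' : ∀ (x : lp (fun _ : ℤ => ℝ) p) (m : ℕ) (n : ℤ),
      (((⇑Sw.symm)^[m] x : lp (fun _ : ℤ => ℝ) p) : ℤ → ℝ) n
        = x (n - m) / ∏ i ∈ Finset.range m, ω (n - (i : ℤ)) := by
    intro x m
    induction m with
    | zero => intro n; simp
    | succ m ih =>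
      intro n
      rw [Function.iterate_succ_apply', hSw', ih (n - 1), Finset.prod_range_succ']
      have h2 : ∏ i ∈ Finset.range m, ω (n - ((i + 1 : ℕ) : ℤ))
          = ∏ i ∈ Finset.range m, ω (n - 1 - (i : ℤ)) := by
        refine Finset.prod_congr rfl fun i _ => ?_
        congr 1
        push_cast
        ring
      have h3 : n - 1 - ((m : ℕ) : ℤ) = n - ((m + 1 : ℕ) : ℤ) := by push_cast; ring
      rw [h2, div_div, h3]
      norm_num

  -- spectral-type constants
  obtain ⟨r, hr1, N1, hr⟩ := hlimsup
  obtain ⟨R, hR1, N2, hR⟩ := hliminf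
  have hr0 : 0 ≤ r :=
    le_trans (Real.rpow_nonneg (abs_nonneg _) _) (hr (max N1 1) (le_max_left _ _) 0)
  have hR0 : (0:ℝ) ≤ R := by linarith
  set ρ : ℝ := max r R⁻¹ with hρdef
  have hρpos : 0 < ρ := lt_of_lt_of_le (inv_pos.mpr (by linarith)) (le_max_right _ _)
  have hρ1 : ρ < 1 := max_lt hr1 (inv_lt_one_of_one_lt₀ hR1)
  set N : ℕ := max (max N1 N2) 1 with hNdef
  -- Claim A : contraction on the stable subspace for large m
  have claimA : ∀ m : ℕ, N + 1 ≤ m → ∀ x : lp (fun _ : ℤ => ℝ) p,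
      (∀ n : ℤ, 0 < n → x n = 0) → ‖(⇑Sw)^[m] x‖ ≤ ρ ^ (m - 1) * ‖x‖ := by
    intro m hm x hx
    refine lp_norm_aux hp x _ _ (pow_nonneg hρpos.le _) (Equiv.addRight (m : ℤ)) ?_
    intro n
    simp only [Equiv.coe_addRight]
    rw [hiter x m n, abs_mul]
    by_cases h0 : (x : ℤ → ℝ) (n + m) = 0
    · rw [h0]; simp
    · have hnm : n + (m : ℤ) ≤ 0 := by
        by_contra hcon
        exact h0 (hx _ (by omega))
      set k : ℕ := (-(n + m)).toNat with hkdef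
      have hkz : (k : ℤ) = -(n + (m : ℤ)) := Int.toNat_of_nonneg (by omega)
      have hprod : ∏ i ∈ Finset.range m, ω (n + 1 + (i : ℤ))
          = ∏ i ∈ Finset.range m, ω (-(k : ℤ) - (i : ℤ)) := by
        rw [← Finset.prod_range_reflect (fun j => ω (-(k : ℤ) - (j : ℤ))) m]
        refine Finset.prod_congr rfl fun j hj => ?_
        have hj' : j < m := Finset.mem_range.mp hj
        congr 1
        omega
      rw [hprod]
      have hkey := hr (m - 1) (by omega) k
      rw [(by omega : m - 1 + 1 = m)] at hkey
      have hle : |∏ i ∈ Finset.range m, ω (-(k : ℤ) - (i : ℤ))| ≤ r ^ (m - 1) :=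
        rpow_key_le (abs_nonneg _) (by omega) hkey
      have hle2 : |∏ i ∈ Finset.range m, ω (-(k : ℤ) - (i : ℤ))| ≤ ρ ^ (m - 1) :=
        hle.trans (pow_le_pow_left₀ hr0 (le_max_left _ _) _)
      exact mul_le_mul_of_nonneg_right hle2 (abs_nonneg _)
  -- Claim B : contraction of the inverse on the unstable subspace for large m
  have claimB : ∀ m : ℕ, N + 1 ≤ m → ∀ x : lp (fun _ : ℤ => ℝ) p,
      (∀ n : ℤ, n ≤ 0 → x n = 0) → ‖(⇑Sw.symm)^[m] x‖ ≤ ρ ^ (m - 1) * ‖x‖ := by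
    intro m hm x hx
    refine lp_norm_aux hp x _ _ (pow_nonneg hρpos.le _) (Equiv.subRight (m : ℤ)) ?_
    intro n
    simp only [Equiv.subRight_apply]
    rw [hiter' x m n, abs_div]
    by_cases h0 : (x : ℤ → ℝ) (n - m) = 0
    · rw [h0]; simp
    · have hnm : 1 ≤ n - (m : ℤ) := by
        by_contra hcon
        exact h0 (hx _ (by omega))
      set k : ℕ := (n - m + 1).toNat with hkdef
      have hkz : (k : ℤ) = n - (m : ℤ) + 1 := Int.toNat_of_nonneg (by omega)
      have hprod : ∏ i ∈ Finset.range m, ω (n - (i : ℤ))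
          = ∏ i ∈ Finset.range m, ω ((k : ℤ) + (i : ℤ)) := by
        rw [← Finset.prod_range_reflect (fun j => ω ((k : ℤ) + (j : ℤ))) m]
        refine Finset.prod_congr rfl fun j hj => ?_
        have hj' : j < m := Finset.mem_range.mp hj
        congr 1
        omega
      rw [hprod]
      have hkey := hR (m - 1) (by omega) k
      rw [(by omega : m - 1 + 1 = m)] at hkey
      have hge : R ^ (m - 1) ≤ |∏ i ∈ Finset.range m, ω ((k : ℤ) + (i : ℤ))| :=
        rpow_key_ge (abs_nonneg _) hR0 (by omega) hkey
      have hRpow : (0:ℝ) < R ^ (m - 1) := pow_pos (by linarith) _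
      calc |(x : ℤ → ℝ) (n - m)| / |∏ i ∈ Finset.range m, ω ((k : ℤ) + (i : ℤ))|
          ≤ |(x : ℤ → ℝ) (n - m)| / R ^ (m - 1) :=
            div_le_div_of_nonneg_left (abs_nonneg _) hRpow hge
        _ = (R⁻¹) ^ (m - 1) * |(x : ℤ → ℝ) (n - m)| := by
            rw [inv_pow, div_eq_mul_inv, mul_comm]
        _ ≤ ρ ^ (m - 1) * |(x : ℤ → ℝ) (n - m)| :=
            mul_le_mul_of_nonneg_right
              (pow_le_pow_left₀ (inv_nonneg.mpr hR0) (le_max_right _ _) _) (abs_nonneg _)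
  -- operator norm bound
  set M : ℝ := max (max ‖(Sw : lp (fun _ : ℤ => ℝ) p →L[ℝ] lp (fun _ : ℤ => ℝ) p)‖
      ‖(Sw.symm : lp (fun _ : ℤ => ℝ) p →L[ℝ] lp (fun _ : ℤ => ℝ) p)‖) 1 with hMdef
  have hM1 : (1:ℝ) ≤ M := le_max_right _ _
  have hMS : ∀ y : lp (fun _ : ℤ => ℝ) p, ‖Sw y‖ ≤ M * ‖y‖ := by
    intro y
    have h := (Sw : lp (fun _ : ℤ => ℝ) p →L[ℝ] lp (fun _ : ℤ => ℝ) p).le_opNorm y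
    simp only [ContinuousLinearEquiv.coe_coe] at h
    exact h.trans (mul_le_mul_of_nonneg_right
      (le_trans (le_max_left _ _) (le_max_left _ _)) (norm_nonneg _))
  have hMS' : ∀ y : lp (fun _ : ℤ => ℝ) p, ‖Sw.symm y‖ ≤ M * ‖y‖ := by
    intro y
    have h := (Sw.symm : lp (fun _ : ℤ => ℝ) p →L[ℝ] lp (fun _ : ℤ => ℝ) p).le_opNorm y
    simp only [ContinuousLinearEquiv.coe_coe] at h
    exact h.trans (mul_le_mul_of_nonneg_right
      (le_trans (le_max_right _ _) (le_max_left _ _)) (norm_nonneg _))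
  have hMiter : ∀ F : lp (fun _ : ℤ => ℝ) p → lp (fun _ : ℤ => ℝ) p,
      (∀ y, ‖F y‖ ≤ M * ‖y‖) → ∀ (x : lp (fun _ : ℤ => ℝ) p) (m : ℕ),
        ‖F^[m] x‖ ≤ M ^ m * ‖x‖ := by
    intro F hF x m
    induction m with
    | zero => simp
    | succ m ih =>
      rw [Function.iterate_succ_apply']
      calc ‖F (F^[m] x)‖ ≤ M * ‖F^[m] x‖ := hF _
        _ ≤ M * (M ^ m * ‖x‖) := mul_le_mul_of_nonneg_left ih (by linarith)
        _ = M ^ (m + 1) * ‖x‖ := by ring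
  -- exponential constants
  set lam : ℝ := -Real.log ρ with hlamdef
  have hlampos : 0 < lam := neg_pos.mpr (Real.log_neg hρpos hρ1)
  have hexp : Real.exp (-lam) = ρ := by rw [hlamdef, neg_neg, Real.exp_log hρpos]
  have hρpow : ∀ j : ℕ, ρ ^ j = Real.exp (-lam * j) := by
    intro j
    rw [← hexp, ← Real.exp_nat_mul]
    congr 1; ring
  set D : ℝ := M ^ (N + 1) * Real.exp (lam * (N + 1)) / ρ with hDdef
  have hMpow : (1:ℝ) ≤ M ^ (N + 1) := one_le_pow₀ hM1
  have hexppow : (1:ℝ) ≤ Real.exp (lam * (N + 1)) := Real.one_le_exp (by positivity)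
  have hD1 : (1:ℝ) ≤ D := by
    rw [hDdef, le_div_iff₀ hρpos, one_mul]
    nlinarith [hρ1.le]
  have combine : ∀ (F : lp (fun _ : ℤ => ℝ) p → lp (fun _ : ℤ => ℝ) p)
      (x : lp (fun _ : ℤ => ℝ) p),
      (∀ m : ℕ, ‖F^[m] x‖ ≤ M ^ m * ‖x‖) →
      (∀ m : ℕ, N + 1 ≤ m → ‖F^[m] x‖ ≤ ρ ^ (m - 1) * ‖x‖) →
      ∀ m : ℕ, ‖F^[m] x‖ ≤ D * Real.exp (-lam * m) * ‖x‖ := by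
    intro F x hb hg m
    rcases le_or_gt m N with hm | hm
    · refine (hb m).trans (mul_le_mul_of_nonneg_right ?_ (norm_nonneg _))
      have e2 : (1:ℝ) ≤ Real.exp (lam * (N + 1)) * Real.exp (-lam * m) / ρ := by
        rw [← Real.exp_add, le_div_iff₀ hρpos, one_mul]
        have hmle : (m : ℝ) ≤ (N : ℝ) + 1 := by exact_mod_cast Nat.le_succ_of_le hm
        have harg : (0:ℝ) ≤ lam * (N + 1) + -lam * m := by nlinarith
        have := Real.one_le_exp harg
        linarith [hρ1.le]
      calc M ^ m ≤ M ^ (N + 1) := pow_le_pow_right₀ hM1 (by omega)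
        _ = M ^ (N + 1) * 1 := by ring
        _ ≤ M ^ (N + 1) * (Real.exp (lam * (N + 1)) * Real.exp (-lam * m) / ρ) :=
            mul_le_mul_of_nonneg_left e2 (by positivity)
        _ = D * Real.exp (-lam * m) := by rw [hDdef]; ring
    · refine (hg m (by omega)).trans (mul_le_mul_of_nonneg_right ?_ (norm_nonneg _))
      rw [hρpow (m - 1)]
      have hcast : ((m - 1 : ℕ) : ℝ) = (m : ℝ) - 1 := by
        rw [Nat.cast_sub (by omega : 1 ≤ m), Nat.cast_one]
      have e3 : Real.exp (-lam * ((m - 1 : ℕ) : ℝ))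
          = Real.exp (-lam * m) * Real.exp lam := by
        rw [← Real.exp_add]; congr 1; rw [hcast]; ring
      rw [e3]
      have hexplam : Real.exp lam = ρ⁻¹ := by
        rw [← hexp, ← Real.exp_neg, neg_neg]
      rw [hexplam]
      calc Real.exp (-lam * m) * ρ⁻¹ = 1 * ρ⁻¹ * Real.exp (-lam * m) := by ring
        _ ≤ M ^ (N + 1) * Real.exp (lam * (N + 1)) * ρ⁻¹ * Real.exp (-lam * m) := by
            refine mul_le_mul_of_nonneg_right ?_ (Real.exp_pos _).le
            refine mul_le_mul_of_nonneg_right ?_ (inv_nonneg.mpr hρpos.le)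
            nlinarith
        _ = D * Real.exp (-lam * m) := by rw [hDdef, div_eq_mul_inv]
  -- decomposition
  have hdecomp : ∀ x : lp (fun _ : ℤ => ℝ) p,
      ∃! y : (lp (fun _ : ℤ => ℝ) p) × (lp (fun _ : ℤ => ℝ) p),
        (∀ n : ℤ, 0 < n → y.1 n = 0) ∧ (∀ n : ℤ, n ≤ 0 → y.2 n = 0) ∧ x = y.1 + y.2 := by
    intro x
    have hmem1 : Memℓp (fun n : ℤ => if 0 < n then 0 else x n) p := by
      refine lp_mem_aux hp x _ 1 one_pos.le (Equiv.refl ℤ) fun n => ?_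
      simp only [Equiv.refl_apply, one_mul]
      split_ifs with h
      · simp
      · exact le_refl _
    have hmem2 : Memℓp (fun n : ℤ => if 0 < n then x n else 0) p := by
      refine lp_mem_aux hp x _ 1 one_pos.le (Equiv.refl ℤ) fun n => ?_
      simp only [Equiv.refl_apply, one_mul]
      split_ifs with h
      · exact le_refl _
      · simp
    refine ⟨(⟨_, hmem1⟩, ⟨_, hmem2⟩), ⟨?_, ?_, ?_⟩, ?_⟩
    · intro n hn
      simp only []
      show (if 0 < n then (0:ℝ) else x n) = 0
      simp [hn]
    · intro n hn
      show (if 0 < n then x n else (0:ℝ)) = 0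
      simp [not_lt.mpr hn]
    · apply lp.ext
      funext n
      show (x : ℤ → ℝ) n = _
      rw [lp.coeFn_add]
      show (x : ℤ → ℝ) n = (if 0 < n then (0:ℝ) else x n) + (if 0 < n then x n else (0:ℝ))
      by_cases h : 0 < n <;> simp [h]
    · rintro ⟨z1, z2⟩ ⟨hz1, hz2, hzx⟩
      have hxz : ∀ n : ℤ, (x : ℤ → ℝ) n = z1 n + z2 n := by
        intro n
        rw [hzx, lp.coeFn_add]
        rfl
      refine Prod.ext ?_ ?_
      · apply lp.ext
        funext n
        show (z1 : ℤ → ℝ) n = (if 0 < n then (0:ℝ) else x n)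
        by_cases h : 0 < n
        · rw [if_pos h]; exact hz1 n h
        · rw [if_neg h]
          have h2 := hxz n
          rw [hz2 n (not_lt.mp h)] at h2
          linarith
      · apply lp.ext
        funext n
        show (z2 : ℤ → ℝ) n = (if 0 < n then x n else (0:ℝ))
        by_cases h : 0 < n
        · rw [if_pos h]
          have h2 := hxz n
          rw [hz1 n h] at h2
          linarith
        · rw [if_neg h]; exact hz2 n (not_lt.mp h)
  refine ⟨⟨hclosed {n : ℤ | 0 < n}, hclosed {n : ℤ | n ≤ 0}⟩, hdecomp, ?_, ?_,
    D, hD1, lam, hlampos, ?_, ?_⟩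
  · intro x hx n hn
    rw [hSw, hx (n + 1) (by omega)]
    ring
  · intro x hx n hn
    rw [hSw', hx (n - 1) (by omega)]
    simp
  · intro x hx m
    exact combine (⇑Sw) x (hMiter _ hMS x) (fun m' hm' => claimA m' hm' x hx) m
  · intro x hx m
    exact combine (⇑Sw.symm) x (hMiter _ hMS' x) (fun m' hm' => claimB m' hm' x hx) m
end
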